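/- arXiv:1611.08990 — 6 statements merged into one kernel-verified Lean document; each statement's English description precedes it below -/
import Mathlib

section
/- Let G be a connected graph of order n ≥ 3 that contains a bridge, and let b be the maximum number of bridges incident with a single vertex of G. Then tpc(G) ≥ b + 1. -/
/-- Interleave two lists, starting with the first. -/
def List.interleaveTPC {α : Type*} : List α → List α → List α
  | [], ys => ys
  | x :: xs, ys => x :: List.interleaveTPC ys xs
termination_by xs ys => xs.length + ys.length

namespace SimpleGraph

variable {V : Type*} {α : Type*} {G : SimpleGraph V}

/-- The sequence of colors `cE e₀, cV v₁, cE e₁, cV v₂, …, cE e_{m-1}` of the edges and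
internal vertices of a walk, in order. -/
def Walk.totalColorSeq (cV : V → α) (cE : Sym2 V → α) {u v : V} (p : G.Walk u v) : List α :=
  (p.edges.map cE).interleaveTPC (p.support.tail.dropLast.map cV)

/-- A walk is total-proper if in its color sequence, any two entries at distance 1 or 2
are distinct.  This says exactly that adjacent edges get distinct colors, adjacent internal
vertices get distinct colors, and every internal vertex gets a color distinct from those of
its incident edges on the walk. -/
def Walk.IsTotalProper (cV : V → α) (cE : Sym2 V → α) {u v : V} (p : G.Walk u v) : Prop :=
  ∀ i a b, (p.totalColorSeq cV cE)[i]? = some a →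
    ((p.totalColorSeq cV cE)[i + 1]? = some b ∨ (p.totalColorSeq cV cE)[i + 2]? = some b) →
    a ≠ b

/-- A total coloring (given by a vertex coloring `cV` and an edge coloring `cE`) makes `G`
total-proper connected if every two distinct vertices are joined by a total-proper path. -/
def IsTPCColoring (G : SimpleGraph V) (cV : V → α) (cE : Sym2 V → α) : Prop :=
  ∀ u v : V, u ≠ v → ∃ p : G.Walk u v, p.IsPath ∧ p.IsTotalProper cV cE

/-- The total-proper connection number: the minimum number of colors in a total coloring
making `G` total-proper connected. -/
noncomputable def tpc (G : SimpleGraph V) : ℕ :=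
  sInf {k | ∃ (cV : V → Fin k) (cE : Sym2 V → Fin k), G.IsTPCColoring cV cE}

end SimpleGraph

lemma List.interleaveTPC_getElem? {α : Type*} : ∀ (xs ys : List α),
    (xs.length = ys.length ∨ xs.length = ys.length + 1) →
    ∀ i : ℕ, (xs.interleaveTPC ys)[2*i]? = xs[i]? ∧ (xs.interleaveTPC ys)[2*i+1]? = ys[i]?
  | [], ys, h, i => by
    have : ys = [] := by
      rcases h with h | h
      · exact List.eq_nil_of_length_eq_zero h.symm
      · simp at h
    subst this; simp [List.interleaveTPC]
  | x :: xs, ys, h, i => by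
    have h' : ys.length = xs.length ∨ ys.length = xs.length + 1 := by
      simp at h; omega
    rw [List.interleaveTPC]
    match i with
    | 0 =>
      refine ⟨by simp, ?_⟩
      simpa using (List.interleaveTPC_getElem? ys xs h' 0).1
    | i + 1 =>
      constructor
      · have h1 : 2 * (i+1) = (2*i+1) + 1 := by ring
        rw [h1, List.getElem?_cons_succ]
        simpa using (List.interleaveTPC_getElem? ys xs h' i).2
      · have h2 : 2 * (i+1) + 1 = (2*(i+1)) + 1 := rfl
        rw [h2, List.getElem?_cons_succ]
        exact (List.interleaveTPC_getElem? ys xs h' (i+1)).1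
termination_by xs ys => xs.length + ys.length

lemma List.interleaveTPC_perm {α : Type*} : ∀ (xs ys : List α), (xs.interleaveTPC ys).Perm (xs ++ ys)
  | [], ys => by simp [List.interleaveTPC]
  | x :: xs, ys => by
    rw [List.interleaveTPC]
    refine ((List.interleaveTPC_perm ys xs).cons x).trans ?_
    rw [List.cons_append]
    exact (List.perm_append_comm).cons x
termination_by xs ys => xs.length + ys.length

namespace SimpleGraph

variable {V : Type*} {α : Type*} {G : SimpleGraph V}

lemma Walk.edge_start_eq {a b : V} (p : G.Walk a b) (hp : p.support.Nodup)
    {e f : Sym2 V} (he : e ∈ p.edges) (hf : f ∈ p.edges) (hae : a ∈ e) (haf : a ∈ f) :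
    e = f := by
  cases p with
  | nil => simp at he
  | cons h q =>
    rename_i x
    have key : ∀ g ∈ (Walk.cons h q).edges, a ∈ g → g = s(a, x) := by
      intro g hg hag
      rw [Walk.edges_cons, List.mem_cons] at hg
      rcases hg with rfl | hg
      · rfl
      · exfalso
        obtain ⟨y, rfl⟩ := Sym2.mem_iff_exists.mp hag
        have := q.fst_mem_support_of_mem_edges hg
        rw [Walk.support_cons, List.nodup_cons] at hp
        exact hp.1 this
    rw [key e he hae, key f hf haf]

lemma Walk.last_edge_spec {a c : V} (q : G.Walk a c) (hq : 0 < q.length) :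
    ∃ E, c ∈ E ∧ q.edges[q.length - 1]? = some E ∧ q.support.tail[q.length - 1]? = some c := by
  induction q with
  | nil => simp at hq
  | cons h q ih =>
    rename_i u x w
    by_cases h0 : 0 < q.length
    · obtain ⟨E, hcE, hE, hS⟩ := ih h0
      refine ⟨E, hcE, ?_, ?_⟩
      · rw [Walk.edges_cons]
        have : (Walk.cons h q).length - 1 = (q.length - 1) + 1 := by
          rw [Walk.length_cons]; omega
        rw [this, List.getElem?_cons_succ]
        exact hE
      · rw [Walk.support_cons]
        have : (Walk.cons h q).length - 1 = (q.length - 1) + 1 := by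
          rw [Walk.length_cons]; omega
        rw [List.tail_cons, this]
        rw [q.support_eq_cons, List.getElem?_cons_succ]
        exact hS
    · have hq0 : q.length = 0 := by omega
      have hxw : x = w := Walk.eq_of_length_eq_zero hq0
      subst hxw
      have : q = Walk.nil := by
        cases q with
        | nil => rfl
        | cons h' q' => simp [Walk.length_cons] at hq0
      subst this
      exact ⟨s(u, x), Sym2.mem_mk_right _ _, by simp, by simp⟩

/-- KEY0: at an internal vertex of a total-proper path, there are exactly two incident
edges of the path, with distinct colors, both distinct from the vertex color. -/
lemma key_internal (cV : V → α) (cE : Sym2 V → α) {w1 w2 : V}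
    (p : G.Walk w1 w2) (hp : p.IsPath) (htp : p.IsTotalProper cV cE) (v : V)
    (hv : v ∈ p.support) (hv1 : v ≠ w1) (hv2 : v ≠ w2) :
    ∃ E1 E2 : Sym2 V, E1 ∈ p.edges ∧ E2 ∈ p.edges ∧ v ∈ E1 ∧ v ∈ E2 ∧
      cE E1 ≠ cE E2 ∧ cV v ≠ cE E1 ∧ cV v ≠ cE E2 ∧
      ∀ e ∈ p.edges, v ∈ e → e = E1 ∨ e = E2 := by
  classical
  set q := p.takeUntil v hv with hqdef
  set r := p.dropUntil v hv with hrdef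
  have hpq : q.append r = p := p.take_spec hv
  have hq : q.IsPath := hp.takeUntil hv
  have hr : r.IsPath := hp.dropUntil hv
  have hql : 0 < q.length := by
    rcases Nat.eq_zero_or_pos q.length with h0 | h0
    · exact absurd (Walk.eq_of_length_eq_zero h0) hv1.symm
    · exact h0
  have hrl : ¬ r.Nil := by
    rw [Walk.not_nil_iff_lt_length]
    rcases Nat.eq_zero_or_pos r.length with h0 | h0
    · exact absurd (Walk.eq_of_length_eq_zero h0) hv2
    · exact h0
  obtain ⟨x, hadj, r', hr'⟩ := Walk.not_nil_iff.mp hrl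
  obtain ⟨E1, hvE1, hE1, hS1⟩ := q.last_edge_spec hql
  set E2 : Sym2 V := s(v, x) with hE2def
  set i := q.length - 1 with hidef
  -- edges of p
  have hedges : p.edges = q.edges ++ r.edges := by rw [← hpq, Walk.edges_append]
  have hqel : q.edges.length = q.length := q.length_edges
  have hpe1 : p.edges[i]? = some E1 := by
    rw [hedges, List.getElem?_append, if_pos (by omega)]
    exact hE1
  have hpe2 : p.edges[i+1]? = some E2 := by
    rw [hedges]
    have hi1 : i + 1 = q.edges.length := by omega
    rw [hi1]
    rw [List.getElem?_append_right (le_refl _)]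
    simp only [Nat.sub_self]
    rw [hr', Walk.edges_cons]
    simp [hE2def]
  -- internal vertices of p
  have hsupp : p.support.tail.dropLast = q.support.tail ++ r.support.tail.dropLast := by
    rw [← hpq, Walk.support_append]
    rw [q.support_eq_cons]
    simp only [List.cons_append, List.tail_cons]
    rw [List.dropLast_append_of_ne_nil]
    rw [hr', Walk.support_cons, List.tail_cons]
    exact r'.support_ne_nil
  have hqsl : q.support.tail.length = q.length := by
    have := q.length_support
    rw [q.support_eq_cons] at this
    simpa using this
  have hpv : p.support.tail.dropLast[i]? = some v := by
    rw [hsupp, List.getElem?_append, if_pos (by omega)]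
    exact hS1
  -- lengths for interleaveTPC
  have hlen : (p.edges.map cE).length = (p.support.tail.dropLast.map cV).length + 1 := by
    simp only [List.length_map, p.length_edges]
    have h1 := p.length_support
    have h2 : p.support.tail.dropLast.length = p.support.length - 2 := by
      rw [List.length_dropLast, List.length_tail]; omega
    have hplen : 0 < p.length := by
      rw [← hpq, Walk.length_append]; omega
    omega
  have hint := fun j => List.interleaveTPC_getElem? (p.edges.map cE)
    (p.support.tail.dropLast.map cV) (Or.inr hlen) j
  have heven : ∀ j, (p.totalColorSeq cV cE)[2*j]? = (p.edges[j]?).map cE := by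
    intro j
    rw [Walk.totalColorSeq, (hint j).1, List.getElem?_map]
  have hodd : ∀ j, (p.totalColorSeq cV cE)[2*j+1]? = (p.support.tail.dropLast[j]?).map cV := by
    intro j
    rw [Walk.totalColorSeq, (hint j).2, List.getElem?_map]
  have c1 : (p.totalColorSeq cV cE)[2*i]? = some (cE E1) := by rw [heven i, hpe1]; rfl
  have c2 : (p.totalColorSeq cV cE)[2*i+1]? = some (cV v) := by rw [hodd i, hpv]; rfl
  have c3 : (p.totalColorSeq cV cE)[2*i+2]? = some (cE E2) := by
    have : 2*i+2 = 2*(i+1) := by ring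
    rw [this, heven (i+1), hpe2]; rfl
  have hne12 : cE E1 ≠ cE E2 := htp (2*i) _ _ c1 (Or.inr c3)
  have hne1v : cE E1 ≠ cV v := htp (2*i) _ _ c1 (Or.inl c2)
  have c3' : (p.totalColorSeq cV cE)[2*i+1+1]? = some (cE E2) := by
    have h23 : 2*i+1+1 = 2*i+2 := by omega
    rw [h23]; exact c3
  have hnev2 : cV v ≠ cE E2 := htp (2*i+1) _ _ c2 (Or.inl c3')
  -- memberships
  have hE1q : E1 ∈ q.edges := by
    obtain ⟨hlt, hEeq⟩ := List.getElem?_eq_some_iff.mp hE1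
    exact hEeq ▸ q.edges.getElem_mem hlt
  have hE2r : E2 ∈ r.edges := by rw [hr', Walk.edges_cons]; exact List.mem_cons_self
  refine ⟨E1, E2, ?_, ?_, hvE1, Sym2.mem_mk_left _ _, hne12, hne1v.symm, hnev2, ?_⟩
  · rw [hedges]; exact List.mem_append_left _ hE1q
  · rw [hedges]; exact List.mem_append_right _ hE2r
  · intro e he hve
    rw [hedges, List.mem_append] at he
    rcases he with he | he
    · left
      have hrev : e ∈ q.reverse.edges := by rw [Walk.edges_reverse, List.mem_reverse]; exact he
      have hrev1 : E1 ∈ q.reverse.edges := by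
        rw [Walk.edges_reverse, List.mem_reverse]; exact hE1q
      exact q.reverse.edge_start_eq (hq.reverse.support_nodup) hrev hrev1 hve hvE1
    · right
      exact r.edge_start_eq (hr.support_nodup) he hE2r hve (Sym2.mem_mk_left _ _)

end SimpleGraph

namespace SimpleGraph

variable {V : Type*} {α : Type*} {G : SimpleGraph V}

lemma isTotalProper_of_nodup (cV : V → α) (cE : Sym2 V → α) {u v : V} {p : G.Walk u v}
    (h : (p.totalColorSeq cV cE).Nodup) : p.IsTotalProper cV cE := by
  intro i a b h1 h2 hab
  subst hab
  have hi : i < (p.totalColorSeq cV cE).length := (List.getElem?_eq_some_iff.mp h1).1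
  rcases h2 with h2 | h2
  · have := (List.getElem?_inj hi h).mp (h1.trans h2.symm); omega
  · have := (List.getElem?_inj hi h).mp (h1.trans h2.symm); omega

lemma walk_reach_del {x y : V} {a z : V} (p : G.Walk a z)
    (hs : (G \ fromEdgeSet {s(x,y)}).Reachable x a ∨ (G \ fromEdgeSet {s(x,y)}).Reachable y a) :
    (G \ fromEdgeSet {s(x,y)}).Reachable x z ∨ (G \ fromEdgeSet {s(x,y)}).Reachable y z := by
  induction p with
  | nil => exact hs
  | cons h q ih =>
    rename_i c d _
    by_cases hce : s(c, d) = s(x, y)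
    · rw [Sym2.eq_iff] at hce
      apply ih
      rcases hce with ⟨rfl, rfl⟩ | ⟨rfl, rfl⟩
      · exact Or.inr (Reachable.refl _)
      · exact Or.inl (Reachable.refl _)
    · have hadj : (G \ fromEdgeSet {s(x,y)}).Adj c d := by
        rw [sdiff_adj]
        refine ⟨h, ?_⟩
        rw [fromEdgeSet_adj]
        rintro ⟨hmem, -⟩
        exact hce (by simpa using hmem)
      apply ih
      rcases hs with hs | hs
      · exact Or.inl (hs.trans hadj.reachable)
      · exact Or.inr (hs.trans hadj.reachable)

lemma bridge_mem_of_path {v w1 w2 : V} (h1 : G.IsBridge s(v, w1)) (h2adj : G.Adj v w2)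
    (hne : s(v, w1) ≠ s(v, w2)) (p : G.Walk w1 w2) : s(v, w1) ∈ p.edges := by
  by_contra hmem
  have hreach : (G \ fromEdgeSet {s(v, w1)}).Reachable w1 w2 := ⟨p.toDeleteEdge _ hmem⟩
  have hadj2 : (G \ fromEdgeSet {s(v, w1)}).Adj v w2 := by
    rw [sdiff_adj]
    refine ⟨h2adj, ?_⟩
    rw [fromEdgeSet_adj]
    rintro ⟨hmem', -⟩
    exact hne (by simpa using hmem'.symm)
  exact (isBridge_iff.mp h1) (hadj2.reachable.trans hreach.symm)

lemma aux_two (cV : V → α) (cE : Sym2 V → α) (hcol : G.IsTPCColoring cV cE) {x y z : V}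
    (he : G.IsBridge s(x, y)) (hzx : z ≠ x) (hzy : z ≠ y)
    (hxz : (G \ fromEdgeSet {s(x, y)}).Reachable x z) : ∃ c1 c2 : α, c1 ≠ c2 := by
  have hadj : G.Adj x y := he.reachable_iff_adj.mp (by
    by_cases hxy : x = y
    · subst hxy; exact Reachable.refl _
    · obtain ⟨p, -, -⟩ := hcol x y hxy; exact ⟨p⟩)
  obtain ⟨p, hp, htp⟩ := hcol y z hzy.symm
  have hmem : s(x, y) ∈ p.edges := by
    by_contra hmem
    have hreach : (G \ fromEdgeSet {s(x, y)}).Reachable y z := ⟨p.toDeleteEdge _ hmem⟩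
    exact (isBridge_iff.mp he) (hxz.trans hreach.symm)
  have hxs : x ∈ p.support := p.fst_mem_support_of_mem_edges hmem
  obtain ⟨E1, E2, -, -, -, -, h12, -, -, -⟩ :=
    key_internal cV cE p hp htp x hxs hadj.ne hzx.symm
  exact ⟨cE E1, cE E2, h12⟩

end SimpleGraph

open SimpleGraph in
theorem tpc_ge_bridges_add_one {V : Type*} [Fintype V] (n b : ℕ)
    (hn : Fintype.card V = n) (h3 : 3 ≤ n) (G : SimpleGraph V) (hG : G.Connected)
    (hbr : ∃ e, G.IsBridge e)
    (hb : ∃ v : V, {e : Sym2 V | G.IsBridge e ∧ v ∈ e}.ncard = b)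
    (hub : ∀ v : V, {e : Sym2 V | G.IsBridge e ∧ v ∈ e}.ncard ≤ b) :
    b + 1 ≤ G.tpc := by
  classical
  have hVcard : 3 ≤ Fintype.card V := hn ▸ h3
  have hVne : Nonempty V := Fintype.card_pos_iff.mp (by omega)
  apply le_csInf
  · -- the set of feasible color counts is nonempty
    refine ⟨Fintype.card V + Fintype.card (Sym2 V),
      fun v => Fin.castAdd _ (Fintype.equivFin V v),
      fun e => Fin.natAdd _ (Fintype.equivFin (Sym2 V) e), ?_⟩
    intro u v huv
    obtain ⟨p, hp⟩ := (hG.preconnected u v).some.toPath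
    refine ⟨p, hp, ?_⟩
    apply isTotalProper_of_nodup
    rw [Walk.totalColorSeq]
    rw [(List.interleaveTPC_perm _ _).nodup_iff]
    rw [List.nodup_append]
    refine ⟨?_, ?_, ?_⟩
    · exact hp.edges_nodup.map (fun a b h => (Fintype.equivFin (Sym2 V)).injective
        (Fin.val_injective (by have := congrArg Fin.val h; simp at this; omega)))
    · refine List.Nodup.map (fun a b h => (Fintype.equivFin V).injective
        (Fin.val_injective (by have := congrArg Fin.val h; simp at this; omega))) ?_
      exact ((List.dropLast_sublist _).trans (List.tail_sublist _)).nodup hp.support_nodup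
    · intro a ha _ hb' rfl
      simp only [List.mem_map] at ha hb'
      obtain ⟨e, -, rfl⟩ := ha
      obtain ⟨w, -, hw⟩ := hb'
      have h1 : (Fin.natAdd (Fintype.card V) (Fintype.equivFin (Sym2 V) e)).val
          = Fintype.card V + (Fintype.equivFin (Sym2 V) e).val := rfl
      have h2 : (Fin.castAdd (Fintype.card (Sym2 V)) (Fintype.equivFin V w)).val
          = (Fintype.equivFin V w).val := rfl
      have := congrArg Fin.val hw
      rw [h2, h1] at this
      have := (Fintype.equivFin V w).isLt
      omega
  · rintro k ⟨cV, cE, hcol⟩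
    obtain ⟨v0⟩ := hVne
    have hk : 0 < k := Fin.pos (cV v0)
    rcases Nat.lt_or_ge b 2 with hb2 | hb2
    · rcases Nat.lt_or_ge b 1 with hb1 | hb1
      · omega
      · -- b = 1 : show 2 ≤ k
        have hb1' : b = 1 := by omega
        subst hb1'
        obtain ⟨e, he⟩ := hbr
        induction e using Sym2.ind with
        | _ x y =>
        have hadj : G.Adj x y := he.reachable_iff_adj.mp (hG.preconnected x y)
        -- find z distinct from x, y
        obtain ⟨z, hz⟩ : ∃ z, z ∈ ({x, y} : Finset V)ᶜ := by
          apply Finset.Nonempty.exists_mem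
          apply Finset.card_pos.mp
          rw [Finset.card_compl]
          have : ({x, y} : Finset V).card ≤ 2 :=
            (Finset.card_insert_le _ _).trans (by simp)
          omega
        simp only [Finset.mem_compl, Finset.mem_insert, Finset.mem_singleton, not_or] at hz
        obtain ⟨hzx, hzy⟩ := hz
        have hreach := walk_reach_del (x := x) (y := y) (hG.preconnected x z).some
          (Or.inl (Reachable.refl _))
        suffices h2k : ∃ c1 c2 : Fin k, c1 ≠ c2 by
          obtain ⟨c1, c2, hc⟩ := h2k
          have : 1 < Fintype.card (Fin k) := Fintype.one_lt_card_iff.mpr ⟨c1, c2, hc⟩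
          rw [Fintype.card_fin] at this
          omega
        rcases hreach with hreach | hreach
        · exact aux_two cV cE hcol he hzx hzy hreach
        · have he' : G.IsBridge s(y, x) := by rwa [Sym2.eq_swap]
          have hreach' : (G \ fromEdgeSet {s(y, x)}).Reachable y z := by
            rwa [Sym2.eq_swap]
          exact aux_two cV cE hcol he' hzy hzx hreach'
    · -- b ≥ 2
      obtain ⟨v, hvB⟩ := hb
      set B : Set (Sym2 V) := {e : Sym2 V | G.IsBridge e ∧ v ∈ e} with hBdef
      have hBfin : B.Finite := Set.toFinite _
      have hpair : ∀ e1 ∈ B, ∀ e2 ∈ B, e1 ≠ e2 → cE e1 ≠ cE e2 ∧ cV v ≠ cE e1 := by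
        rintro e1 ⟨hbr1, hv1⟩ e2 ⟨hbr2, hv2⟩ hne
        obtain ⟨w1, rfl⟩ := Sym2.mem_iff_exists.mp hv1
        obtain ⟨w2, rfl⟩ := Sym2.mem_iff_exists.mp hv2
        have hadj1 : G.Adj v w1 := hbr1.reachable_iff_adj.mp (hG.preconnected v w1)
        have hadj2 : G.Adj v w2 := hbr2.reachable_iff_adj.mp (hG.preconnected v w2)
        have hw12 : w1 ≠ w2 := by rintro rfl; exact hne rfl
        obtain ⟨p, hp, htp⟩ := hcol w1 w2 hw12
        have hm1 : s(v, w1) ∈ p.edges := bridge_mem_of_path hbr1 hadj2 hne p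
        have hm2 : s(v, w2) ∈ p.edges := by
          have := bridge_mem_of_path hbr2 hadj1 hne.symm p.reverse
          rwa [Walk.edges_reverse, List.mem_reverse] at this
        have hvs : v ∈ p.support := p.fst_mem_support_of_mem_edges hm1
        obtain ⟨E1, E2, -, -, -, -, h12, hv1', hv2', huniq⟩ :=
          key_internal cV cE p hp htp v hvs hadj1.ne hadj2.ne
        have u1 := huniq _ hm1 (Sym2.mem_mk_left _ _)
        have u2 := huniq _ hm2 (Sym2.mem_mk_left _ _)
        rcases u1 with rfl | rfl <;> rcases u2 with h | h
        · exact absurd h.symm hne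
        · rw [h]; exact ⟨h12, hv1'⟩
        · rw [h]; exact ⟨h12.symm, hv2'⟩
        · exact absurd h.symm hne
      have hinj : Set.InjOn cE B := by
        intro a ha b hb' hab
        by_contra hne
        exact (hpair a ha b hb' hne).1 hab
      have hnotmem : cV v ∉ cE '' B := by
        rintro ⟨e, heB, heq⟩
        obtain ⟨e', he'B, hne⟩ := Set.exists_ne_of_one_lt_ncard (by omega : 1 < B.ncard) e
        exact (hpair e heB e' he'B hne.symm).2 heq.symm
      have hC : (insert (cV v) (cE '' B)).ncard = b + 1 := by
        rw [Set.ncard_insert_of_notMem hnotmem (hBfin.image _),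
          Set.ncard_image_of_injOn hinj, hvB]
      calc b + 1 = (insert (cV v) (cE '' B)).ncard := hC.symm
        _ ≤ (Set.univ : Set (Fin k)).ncard := Set.ncard_le_ncard (Set.subset_univ _)
        _ = k := by rw [Set.ncard_univ, Nat.card_eq_fintype_card, Fintype.card_fin]
end

section
/- If T is a tree of order n ≥ 3 with maximum degree Δ(T), then tpc(T) = Δ(T) + 1. -/
open SimpleGraph

section Seq
variable {α : Type*}

def PSeq (l : List α) : Prop := ∀ i (a b : α), l[i]? = some a →
    (l[i + 1]? = some b ∨ l[i + 2]? = some b) → a ≠ b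

lemma pseq_nil : PSeq ([] : List α) := by intro i a b h; simp at h

lemma pseq_single (a : α) : PSeq [a] := by
  intro i x y hx hy
  rcases hy with hy | hy <;> · rw [List.getElem?_eq_some_iff] at hy; simp at hy

lemma pseq_cons {a : α} {l : List α}
    (h1 : ∀ b, l[0]? = some b ∨ l[1]? = some b → a ≠ b) (h2 : PSeq l) :
    PSeq (a :: l) := by
  intro i x y hx hy
  match i with
  | 0 =>
    simp at hx; subst hx
    exact h1 y (by simpa using hy)
  | (n+1) =>
    simp only [List.getElem?_cons_succ] at hx hy
    exact h2 n x y hx hy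
end Seq

namespace SimpleGraph

variable {V : Type*} {α : Type*} {G : SimpleGraph V}

lemma Walk.totalColorSeq_nil (cV : V → α) (cE : Sym2 V → α) {u : V} :
    (Walk.nil : G.Walk u u).totalColorSeq cV cE = [] := by
  simp [Walk.totalColorSeq, List.interleaveTPC]

lemma Walk.totalColorSeq_cons_nil (cV : V → α) (cE : Sym2 V → α) {u v : V} (h : G.Adj u v) :
    (Walk.cons h Walk.nil).totalColorSeq cV cE = [cE s(u, v)] := by
  simp [Walk.totalColorSeq, List.interleaveTPC]

lemma Walk.totalColorSeq_cons_cons (cV : V → α) (cE : Sym2 V → α) {u v w x : V}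
    (h : G.Adj u v) (h' : G.Adj v w) (q : G.Walk w x) :
    (Walk.cons h (Walk.cons h' q)).totalColorSeq cV cE
      = cE s(u, v) :: cV v :: (Walk.cons h' q).totalColorSeq cV cE := by
  simp only [Walk.totalColorSeq, Walk.edges_cons, Walk.support_cons, List.map_cons,
    List.tail_cons]
  rw [show (v :: q.support).dropLast = v :: q.support.dropLast by
    cases hq : q.support with
    | nil => exact absurd hq q.support_ne_nil
    | cons a t => simp [hq]]
  simp [List.interleaveTPC]

end SimpleGraph
namespace SimpleGraph

variable {V : Type*} {α : Type*} {G : SimpleGraph V}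

/-- A proper total coloring. -/
def IsProperTotal (G : SimpleGraph V) (cV : V → α) (cE : Sym2 V → α) : Prop :=
  (∀ u v, G.Adj u v → cV u ≠ cV v) ∧
  (∀ u v, G.Adj u v → cV u ≠ cE s(u, v)) ∧
  (∀ u v w, G.Adj u v → G.Adj v w → u ≠ w → cE s(u, v) ≠ cE s(v, w))

lemma Walk.totalColorSeq_head (cV : V → α) (cE : Sym2 V → α) {v w x : V}
    (h' : G.Adj v w) (r : G.Walk w x) :
    ((Walk.cons h' r).totalColorSeq cV cE)[0]? = some (cE s(v, w)) := by
  cases r with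
  | nil => rw [Walk.totalColorSeq_cons_nil]; rfl
  | cons h'' r' => rw [Walk.totalColorSeq_cons_cons]; rfl

lemma Walk.totalColorSeq_one (cV : V → α) (cE : Sym2 V → α) {v w x : V}
    (h' : G.Adj v w) (r : G.Walk w x) (b : α)
    (hb : ((Walk.cons h' r).totalColorSeq cV cE)[1]? = some b) : b = cV w := by
  cases r with
  | nil => rw [Walk.totalColorSeq_cons_nil] at hb; simp at hb
  | cons h'' r' =>
    rw [Walk.totalColorSeq_cons_cons] at hb
    simp at hb; exact hb.symm

lemma IsProperTotal.isTotalProper {cV : V → α} {cE : Sym2 V → α}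
    (hp : G.IsProperTotal cV cE) {u v : V} (p : G.Walk u v) (hpath : p.IsPath) :
    p.IsTotalProper cV cE := by
  show PSeq (p.totalColorSeq cV cE)
  induction p with
  | nil => rw [Walk.totalColorSeq_nil]; exact pseq_nil
  | @cons u v x h q ih =>
    cases q with
    | nil => rw [Walk.totalColorSeq_cons_nil]; exact pseq_single _
    | @cons _ w _ h' r =>
      rw [Walk.cons_isPath_iff] at hpath
      obtain ⟨hq, hu⟩ := hpath
      have hw : w ∈ (Walk.cons h' r).support := by
        rw [Walk.support_cons]; exact List.mem_cons_of_mem _ r.start_mem_support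
      have huw : u ≠ w := fun e => hu (e ▸ hw)
      rw [Walk.totalColorSeq_cons_cons]
      apply pseq_cons
      · intro b hb
        rcases hb with hb | hb
        · simp at hb
          subst hb
          have := hp.2.1 v u h.symm
          rw [Sym2.eq_swap] at this
          exact fun e => this e.symm
        · rw [List.getElem?_cons_succ, Walk.totalColorSeq_head cV cE h' r] at hb
          simp at hb
          subst hb
          exact hp.2.2 u v w h h' huw
      apply pseq_cons
      · intro b hb
        rcases hb with hb | hb
        · rw [Walk.totalColorSeq_head cV cE h' r] at hb
          simp at hb
          subst hb
          exact hp.2.1 v w h'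
        · have := Walk.totalColorSeq_one cV cE h' r b hb
          subst this
          exact hp.1 v w h'
      exact ih hq

end SimpleGraph
namespace SimpleGraph

variable {V : Type*} {T : SimpleGraph V}

lemma adj_eq_of_degree_one [Fintype V] [DecidableRel T.Adj] {v a b : V}
    (hv : T.degree v = 1) (ha : T.Adj v a) (hb : T.Adj v b) : a = b := by
  obtain ⟨x, hx⟩ := Finset.card_eq_one.mp (by rw [← T.card_neighborFinset_eq_degree] at hv; exact hv)
  have h1 : a ∈ T.neighborFinset v := by rwa [T.mem_neighborFinset]
  have h2 : b ∈ T.neighborFinset v := by rwa [T.mem_neighborFinset]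
  rw [hx, Finset.mem_singleton] at h1 h2
  rw [h1, h2]

lemma degree_pos_of_conn [Fintype V] [DecidableRel T.Adj]
    (hc : T.Connected) (h2 : 2 ≤ Fintype.card V) (v : V) : 0 < T.degree v := by
  obtain ⟨w, hw⟩ := Fintype.exists_ne_of_one_lt_card (by omega) v
  obtain ⟨p⟩ := hc.preconnected v w
  cases p with
  | nil => exact absurd rfl hw.symm
  | cons h q => exact (T.degree_pos_iff_exists_adj v).mpr ⟨_, h⟩

lemma exists_leaf [Fintype V] [DecidableRel T.Adj] (hT : T.IsTree)
    (h2 : 2 ≤ Fintype.card V) : ∃ v, T.degree v = 1 := by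
  by_contra h
  push_neg at h
  have h2' : ∀ v, 2 ≤ T.degree v := fun v => by
    have := h v; have := degree_pos_of_conn hT.isConnected h2 v; omega
  have hsum := T.sum_degrees_eq_twice_card_edges
  have hcard := hT.card_edgeFinset
  have hge : 2 * Fintype.card V ≤ ∑ v, T.degree v := by
    calc 2 * Fintype.card V = ∑ _v : V, 2 := by
          simp [Finset.sum_const, Finset.card_univ, mul_comm]
    _ ≤ _ := Finset.sum_le_sum (fun v _ => h2' v)
  omega

lemma two_le_maxDegree [Fintype V] [DecidableRel T.Adj] (hT : T.IsTree)
    (h3 : 3 ≤ Fintype.card V) : 2 ≤ T.maxDegree := by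
  by_contra h
  push_neg at h
  have hle : ∀ v, T.degree v ≤ 1 := fun v => le_trans (T.degree_le_maxDegree v) (by omega)
  have hsum := T.sum_degrees_eq_twice_card_edges
  have hcard := hT.card_edgeFinset
  have : ∑ v, T.degree v ≤ Fintype.card V := by
    calc ∑ v, T.degree v ≤ ∑ _v : V, 1 := Finset.sum_le_sum (fun v _ => hle v)
    _ = Fintype.card V := by simp
  omega

lemma leaf_not_mem_support [Fintype V] [DecidableRel T.Adj] {v : V}
    (hv : T.degree v = 1) : ∀ {a b : V} (p : T.Walk a b), p.IsPath → a ≠ v → b ≠ v →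
    v ∉ p.support := by
  intro a b p
  induction p with
  | nil => intro _ ha _ hm; simp at hm; exact ha hm.symm
  | @cons a c b h q ih =>
    intro hp ha hb hmem
    rw [Walk.support_cons, List.mem_cons] at hmem
    rcases hmem with h1 | hmem
    · exact ha h1.symm
    by_cases hc : c = v
    · subst hc
      cases q with
      | nil => exact hb rfl
      | @cons _ d _ h' r =>
        have had : a = d := adj_eq_of_degree_one hv h.symm h'
        rw [Walk.cons_isPath_iff] at hp
        apply hp.2
        rw [Walk.support_cons, List.mem_cons]
        exact Or.inr (had ▸ r.start_mem_support)
    · exact ih hp.of_cons hc hb hmem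

lemma reachable_induce_of_support {s : Set V} :
    ∀ {a b : V} (p : T.Walk a b) (ha : a ∈ s) (hb : b ∈ s),
    (∀ x ∈ p.support, x ∈ s) → (T.induce s).Reachable ⟨a, ha⟩ ⟨b, hb⟩ := by
  intro a b p
  induction p with
  | nil => intro ha hb _; rfl
  | @cons a c b h q ih =>
    intro ha hb hs
    have hc : c ∈ s := hs c (by rw [Walk.support_cons]; exact List.mem_cons_of_mem _ q.start_mem_support)
    have h1 : (T.induce s).Adj ⟨a, ha⟩ ⟨c, hc⟩ := by simpa using h
    exact h1.reachable.trans (ih hc hb fun x hx => hs x (by rw [Walk.support_cons]; exact List.mem_cons_of_mem _ hx))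

lemma induce_isAcyclic (hg : T.IsAcyclic) (s : Set V) : (T.induce s).IsAcyclic := by
  intro v c hc
  exact hg (c.map (Embedding.induce s (G := T)).toHom)
    ((Walk.map_isCycle_iff_of_injective (Embedding.induce s (G := T)).injective).mpr hc)

lemma induce_compl_leaf_isTree [Fintype V] [DecidableRel T.Adj] (hT : T.IsTree) {v : V}
    (hv : T.degree v = 1) (h2 : 2 ≤ Fintype.card V) :
    (T.induce {x | x ≠ v}).IsTree := by
  classical
  constructor
  · rw [connected_iff]
    constructor
    · rintro ⟨a, ha⟩ ⟨b, hb⟩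
      obtain ⟨p, hp⟩ := (hT.existsUnique_path a b).exists
      exact reachable_induce_of_support p ha hb
        (fun x hx => fun hxv => leaf_not_mem_support hv p hp ha hb (hxv ▸ hx))
    · obtain ⟨w, hw⟩ := Fintype.exists_ne_of_one_lt_card (by omega) v
      exact ⟨⟨w, hw⟩⟩
  · exact induce_isAcyclic hT.IsAcyclic _

end SimpleGraph
namespace SimpleGraph

variable {V : Type*} {T : SimpleGraph V}

lemma induce_neighbor_val_mem [Fintype V] [DecidableRel T.Adj] {s : Set V}
    [Fintype s] [DecidableRel (T.induce s).Adj] (x w : s) (hw : w ∈ (T.induce s).neighborFinset x) :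
    (w : V) ∈ T.neighborFinset (x : V) := by
  rw [mem_neighborFinset] at hw ⊢
  simpa using hw

lemma induce_degree_le [Fintype V] [DecidableRel T.Adj] {s : Set V}
    [Fintype s] [DecidableRel (T.induce s).Adj] (x : s) :
    (T.induce s).degree x ≤ T.degree (x : V) := by
  classical
  rw [← card_neighborFinset_eq_degree, ← card_neighborFinset_eq_degree]
  rw [← Finset.card_image_of_injective _ Subtype.val_injective]
  apply Finset.card_le_card
  intro w hw
  simp only [Finset.mem_image] at hw
  obtain ⟨w', hw', rfl⟩ := hw
  exact induce_neighbor_val_mem x w' hw'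

lemma induce_degree_lt [Fintype V] [DecidableRel T.Adj] {v : V}
    [Fintype {x | x ≠ v}] [DecidableRel (T.induce {x | x ≠ v}).Adj] (x : {x | x ≠ v}) (hadj : T.Adj (x : V) v) :
    (T.induce {x | x ≠ v}).degree x + 1 ≤ T.degree (x : V) := by
  classical
  have hvmem : v ∈ T.neighborFinset (x : V) := by rwa [mem_neighborFinset]
  have hsub : (((T.induce {x | x ≠ v}).neighborFinset x).image Subtype.val)
      ⊆ T.neighborFinset (x : V) \ {v} := by
    intro w hw
    simp only [Finset.mem_image] at hw
    obtain ⟨w', hw', rfl⟩ := hw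
    rw [Finset.mem_sdiff, Finset.mem_singleton]
    exact ⟨induce_neighbor_val_mem x w' hw', w'.2⟩
  have hcard : ((T.induce {x | x ≠ v}).neighborFinset x).card
      ≤ (T.neighborFinset (x : V) \ {v}).card := by
    rw [← Finset.card_image_of_injective _ Subtype.val_injective]
    exact Finset.card_le_card hsub
  have hd : (T.neighborFinset (x : V) \ {v}).card = (T.neighborFinset (x : V)).card - 1 := by
    rw [Finset.card_sdiff_of_subset (Finset.singleton_subset_iff.mpr hvmem), Finset.card_singleton]
  have hpos : 1 ≤ (T.neighborFinset (x : V)).card := Finset.card_pos.mpr ⟨v, hvmem⟩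
  rw [← card_neighborFinset_eq_degree, ← card_neighborFinset_eq_degree]
  omega

end SimpleGraph
namespace SimpleGraph

lemma exists_notin_finset {k : ℕ} (s : Finset (Fin k)) (h : s.card < k) : ∃ c, c ∉ s := by
  by_contra h'
  push_neg at h'
  have hsub : (Finset.univ : Finset (Fin k)) ⊆ s := fun c _ => h' c
  have := Finset.card_le_card hsub
  simp [Finset.card_univ] at this
  omega

lemma exists_isProperTotal (n : ℕ) : ∀ {V : Type*} [Fintype V] (T : SimpleGraph V)
    [DecidableRel T.Adj] (k : ℕ), Fintype.card V ≤ n → T.IsTree → 3 ≤ k →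
    (∀ v, T.degree v + 1 ≤ k) →
    ∃ (cV : V → Fin k) (cE : Sym2 V → Fin k), T.IsProperTotal cV cE := by
  induction n with
  | zero =>
    intro V _ T _ k hcard hT _ _
    have hne : Nonempty V := hT.isConnected.nonempty
    rw [Nat.le_zero, Fintype.card_eq_zero_iff] at hcard
    exact (hcard.false hne.some).elim
  | succ n ih =>
    intro V _ T _ k hcard hT hk3 hdeg
    classical
    by_cases h1 : Fintype.card V ≤ 1
    · exact ⟨fun _ => ⟨0, by omega⟩, fun _ => ⟨0, by omega⟩,
        fun a b hab => absurd (Fintype.card_le_one_iff.mp h1 a b) hab.ne,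
        fun a b hab => absurd (Fintype.card_le_one_iff.mp h1 a b) hab.ne,
        fun a b c hab _ _ => absurd (Fintype.card_le_one_iff.mp h1 a b) hab.ne⟩
    push_neg at h1
    have h1 : 2 ≤ Fintype.card V := h1
    obtain ⟨v, hv⟩ := exists_leaf hT h1
    obtain ⟨u, hu⟩ : ∃ u, T.Adj v u := (T.degree_pos_iff_exists_adj v).mp (by omega)
    set s : Set V := {x | x ≠ v} with hs
    haveI hfs : Fintype ↥s := Subtype.fintype _
    haveI hdr : DecidableRel (T.induce s).Adj := fun a b => decidable_of_iff (T.Adj a b) (by simp)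
    have hT' : (T.induce s).IsTree := induce_compl_leaf_isTree hT hv h1
    have hcards : Fintype.card ↥s < Fintype.card V := by
      simpa using Fintype.card_lt_of_injective_of_notMem (f := (Subtype.val : ↥s → V))
        Subtype.val_injective (b := v) (by simp [hs])
    have hdeg' : ∀ x : ↥s, (T.induce s).degree x + 1 ≤ k := fun x => by
      have h2 := induce_degree_le (T := T) (s := s) x
      have h3 := hdeg (x : V)
      omega
    obtain ⟨cV', cE', hB', hC', hA'⟩ := ih (T.induce s) k (by omega) hT' hk3 hdeg'
    have hune : u ≠ v := hu.ne'
    set u' : ↥s := ⟨u, hune⟩ with hu'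
    set avoid : Finset (Fin k) :=
      insert (cV' u') (((T.induce s).neighborFinset u').image (fun w => cE' s(u', w))) with havoid
    have havc : avoid.card < k := by
      have h2 : (((T.induce s).neighborFinset u').image (fun w => cE' s(u', w))).card
          ≤ (T.induce s).degree u' := by
        rw [← card_neighborFinset_eq_degree]
        exact Finset.card_image_le
      have h3 : (T.induce s).degree u' + 1 ≤ T.degree u :=
        induce_degree_lt (v := v) u' hu.symm
      have h4 := hdeg u
      have h5 : avoid.card ≤ (((T.induce s).neighborFinset u').image
          (fun w => cE' s(u', w))).card + 1 := by
        rw [havoid]; exact Finset.card_insert_le _ _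
      omega
    obtain ⟨c₀, hc₀⟩ := exists_notin_finset avoid havc
    have hc₀1 : c₀ ≠ cV' u' := fun e => hc₀ (by rw [e, havoid]; exact Finset.mem_insert_self _ _)
    have hc₀2 : ∀ w : ↥s, (T.induce s).Adj u' w → c₀ ≠ cE' s(u', w) := fun w hw e => by
      refine hc₀ ?_
      rw [e, havoid]
      exact Finset.mem_insert_of_mem
        (Finset.mem_image_of_mem _ ((mem_neighborFinset _ _ _).mpr hw))
    obtain ⟨c₁, hc₁⟩ := exists_notin_finset {cV' u', c₀}
      (lt_of_le_of_lt (Finset.card_insert_le _ _) (by simp; omega))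
    rw [Finset.mem_insert, Finset.mem_singleton] at hc₁
    push_neg at hc₁
    set cV : V → Fin k := fun x => if hx : x = v then c₁ else cV' ⟨x, hx⟩ with hcV
    have hsym : ∀ a b : V,
        (if ha : a = v then c₀ else if hb : b = v then c₀ else cE' s(⟨a, ha⟩, ⟨b, hb⟩))
        = (if hb : b = v then c₀ else if ha : a = v then c₀ else cE' s(⟨b, hb⟩, ⟨a, ha⟩)) := by
      intro a b
      by_cases ha : a = v <;> by_cases hb : b = v <;> simp [ha, hb, Sym2.eq_swap]
    set cE : Sym2 V → Fin k := Sym2.lift ⟨fun a b =>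
      if ha : a = v then c₀ else if hb : b = v then c₀ else cE' s(⟨a, ha⟩, ⟨b, hb⟩), hsym⟩ with hcE
    have hcEval : ∀ (a b : V) (ha : a ≠ v) (hb : b ≠ v),
        cE s(a, b) = cE' s(⟨a, ha⟩, ⟨b, hb⟩) := by
      intro a b ha hb
      rw [hcE]
      simp [ha, hb]
    have hcEvalv : ∀ b : V, cE s(v, b) = c₀ := by intro b; rw [hcE]; simp
    have hcEvalv' : ∀ a : V, cE s(a, v) = c₀ := by
      intro a; rw [hcE]; by_cases ha : a = v <;> simp [ha]
    have hcVv : cV v = c₁ := by simp [hcV]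
    have hcVx : ∀ (x : V) (hx : x ≠ v), cV x = cV' ⟨x, hx⟩ := by
      intro x hx; simp [hcV, hx]
    have huniq : ∀ y, T.Adj v y → y = u := fun y hy => adj_eq_of_degree_one hv hy hu
    have hadj' : ∀ {a b : V} (ha : a ≠ v) (hb : b ≠ v), T.Adj a b →
        (T.induce s).Adj ⟨a, ha⟩ ⟨b, hb⟩ := fun _ _ h => by simpa using h
    refine ⟨cV, cE, ?_, ?_, ?_⟩
    · intro x y hxy
      by_cases hx : x = v
      · subst hx
        obtain rfl := huniq y hxy
        rw [hcVv, hcVx y hune]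
        exact hc₁.1
      by_cases hy : y = v
      · subst hy
        obtain rfl := huniq x hxy.symm
        rw [hcVx x hune, hcVv]
        exact fun e => hc₁.1 e.symm
      · rw [hcVx x hx, hcVx y hy]
        exact hB' _ _ (hadj' hx hy hxy)
    · intro x y hxy
      by_cases hx : x = v
      · subst hx
        rw [hcVv, hcEvalv]
        exact hc₁.2
      by_cases hy : y = v
      · subst hy
        obtain rfl := huniq x hxy.symm
        rw [hcVx x hune, hcEvalv']
        exact fun e => hc₀1 e.symm
      · rw [hcVx x hx, hcEval x y hx hy]
        exact hC' _ _ (hadj' hx hy hxy)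
    · intro x y z hxy hyz hxz
      by_cases hy : y = v
      · subst hy
        obtain rfl := huniq x hxy.symm
        obtain rfl := huniq z hyz
        exact absurd rfl hxz
      by_cases hx : x = v
      · have hyu : y = u := huniq y (hx ▸ hxy)
        have hz : z ≠ v := fun e => hxz (hx.trans e.symm)
        rw [hx, hyu, hcEvalv, hcEval u z hune hz]
        exact hc₀2 ⟨z, hz⟩ (hadj' hune hz (hyu ▸ hyz))
      by_cases hz : z = v
      · subst hz
        obtain rfl := huniq y hyz.symm
        rw [hcEval x y hx hune, hcEvalv']
        have h6 := hc₀2 ⟨x, hx⟩ (hadj' hune hx hxy.symm)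
        rw [Sym2.eq_swap] at h6
        exact fun e => h6 e.symm
      · rw [hcEval x y hx hy, hcEval y z hy hz]
        exact hA' _ _ _ (hadj' hx hy hxy) (hadj' hy hz hyz)
          (fun e => hxz (congrArg Subtype.val e))

end SimpleGraph
open SimpleGraph in
theorem tpc_tree {V : Type*} [Fintype V] (T : SimpleGraph V)
    [DecidableRel T.Adj] (hT : T.IsTree) (h3 : 3 ≤ Fintype.card V) :
    T.tpc = T.maxDegree + 1 := by
  classical
  have hΔ2 : 2 ≤ T.maxDegree := two_le_maxDegree hT h3
  have hne : Nonempty V := by rw [← Fintype.card_pos_iff]; omega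
  have hmem : T.maxDegree + 1 ∈
      {k | ∃ (cV : V → Fin k) (cE : Sym2 V → Fin k), T.IsTPCColoring cV cE} := by
    obtain ⟨cV, cE, hp⟩ := exists_isProperTotal (Fintype.card V) T (T.maxDegree + 1)
      le_rfl hT (by omega) (fun v => by have := T.degree_le_maxDegree v; omega)
    refine ⟨cV, cE, fun a b hab => ?_⟩
    obtain ⟨p⟩ := hT.isConnected.preconnected a b
    exact ⟨p.toPath.1, p.toPath.2, hp.isTotalProper _ p.toPath.2⟩
  have hlow : ∀ k ∈ {k | ∃ (cV : V → Fin k) (cE : Sym2 V → Fin k), T.IsTPCColoring cV cE},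
      T.maxDegree + 1 ≤ k := by
    rintro k ⟨cV, cE, hcol⟩
    obtain ⟨v, hvdeg⟩ := T.exists_maximal_degree_vertex
    have key : ∀ {a b : V}, T.Adj v a → T.Adj v b → a ≠ b →
        cE s(a, v) ≠ cV v ∧ cE s(a, v) ≠ cE s(v, b) ∧ cV v ≠ cE s(v, b) := by
      intro a b ha hb hab
      obtain ⟨p, hp, hptp⟩ := hcol a b hab
      have hpath : (Walk.cons ha.symm (Walk.cons hb Walk.nil)).IsPath := by
        rw [Walk.isPath_def]
        simp only [Walk.support_cons, Walk.support_nil, List.nodup_cons, List.mem_cons,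
          List.mem_singleton, List.not_mem_nil, not_or, List.nodup_nil, and_true]
        refine ⟨⟨ha.ne', hab, not_false⟩, ⟨hb.ne, not_false⟩, not_false⟩
      obtain ⟨q, hq, huq⟩ := hT.existsUnique_path a b
      have h1 : p = Walk.cons ha.symm (Walk.cons hb Walk.nil) := by
        rw [huq p hp, huq _ hpath]
      rw [h1] at hptp
      have hseq : (Walk.cons ha.symm (Walk.cons hb Walk.nil)).totalColorSeq cV cE
          = [cE s(a, v), cV v, cE s(v, b)] := by
        rw [Walk.totalColorSeq_cons_cons, Walk.totalColorSeq_cons_nil]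
      exact ⟨hptp 0 _ _ (by simp [hseq]) (Or.inl (by simp [hseq])),
             hptp 0 _ _ (by simp [hseq]) (Or.inr (by simp [hseq])),
             hptp 1 _ _ (by simp [hseq]) (Or.inl (by simp [hseq]))⟩
    have h2d : 2 ≤ T.degree v := by omega
    have hfcard : 1 < (T.neighborFinset v).card := by
      rw [card_neighborFinset_eq_degree]; omega
    have hinj : Set.InjOn (fun w => cE s(v, w)) ↑(T.neighborFinset v) := by
      intro a ha b hb hFeq
      by_contra hab
      have ha' : T.Adj v a := (mem_neighborFinset _ _ _).mp (Finset.mem_coe.mp ha)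
      have hb' : T.Adj v b := (mem_neighborFinset _ _ _).mp (Finset.mem_coe.mp hb)
      have hkey := (key ha' hb' hab).2.1
      rw [Sym2.eq_swap] at hkey
      exact hkey hFeq
    have hnotmem : cV v ∉ (T.neighborFinset v).image (fun w => cE s(v, w)) := by
      rw [Finset.mem_image]
      rintro ⟨w, hw, hFw⟩
      obtain ⟨w2, hw2, hwne⟩ := Finset.exists_mem_ne hfcard w
      have hkey := (key ((mem_neighborFinset _ _ _).mp hw2)
        ((mem_neighborFinset _ _ _).mp hw) hwne).2.2
      exact hkey hFw.symm
    have hcard2 : T.degree v + 1 ≤ k := by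
      have h7 : ((T.neighborFinset v).image (fun w => cE s(v, w))).card = T.degree v := by
        rw [Finset.card_image_of_injOn hinj, card_neighborFinset_eq_degree]
      have h8 : (insert (cV v) ((T.neighborFinset v).image (fun w => cE s(v, w)))).card
          = T.degree v + 1 := by
        rw [Finset.card_insert_of_notMem hnotmem, h7]
      have h9 := Finset.card_le_univ (insert (cV v) ((T.neighborFinset v).image
        (fun w => cE s(v, w))))
      rw [Fintype.card_fin] at h9
      omega
    omega
  exact le_antisymm (Nat.sInf_le hmem) (hlow _ (Nat.sInf_mem ⟨_, hmem⟩))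
end

section
/- If G is a traceable graph (a graph containing a Hamiltonian path) that is not complete, then tpc(G) = 3. -/
namespace SimpleGraph

variable {V : Type*} {α : Type*} {G : SimpleGraph V}

lemma interleave_cc {β : Type*} (x y : β) (xs ys : List β) :
    (x :: xs).interleaveTPC (y :: ys) = x :: y :: xs.interleaveTPC ys := by
  rw [List.interleaveTPC, List.interleaveTPC]

lemma tcs_cons (cV : V → α) (cE : Sym2 V → α) {u v w : V} (h : G.Adj u v) (q : G.Walk v w)
    (hq : q.support.tail ≠ []) :
    (Walk.cons h q).totalColorSeq cV cE = cE s(u, v) :: cV v :: q.totalColorSeq cV cE := by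
  obtain ⟨z, t, ht⟩ := List.exists_cons_of_ne_nil hq
  unfold Walk.totalColorSeq
  rw [Walk.edges_cons, Walk.support_cons, List.tail_cons, Walk.support_eq_cons q, List.tail_cons,
    ht, List.map_cons, List.dropLast_cons₂, List.map_cons, interleave_cc]

/-- The expected total color sequence of a path along a given vertex list. -/
def seqL (cV : V → α) (cE : Sym2 V → α) : List V → List α
  | [] => []
  | [_] => []
  | [a, b] => [cE s(a, b)]
  | a :: b :: c :: l => cE s(a, b) :: cV b :: seqL cV cE (b :: c :: l)

lemma seqL_cons (cV : V → α) (cE : Sym2 V → α) (a x : V) (l : List V) (b : V) :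
    seqL cV cE (a :: x :: (l ++ [b])) = cE s(a, x) :: cV x :: seqL cV cE (x :: (l ++ [b])) := by
  cases l <;> rfl

lemma exists_walk_aux (cV : V → α) (cE : Sym2 V → α) :
    ∀ (l : List V) (a b : V), List.Chain' G.Adj (a :: (l ++ [b])) →
      ∃ q : G.Walk a b, q.support = a :: (l ++ [b]) ∧
        q.totalColorSeq cV cE = seqL cV cE (a :: (l ++ [b]))
  | [], a, b, hc => by
    have h : G.Adj a b := List.isChain_pair.mp hc
    refine ⟨Walk.cons h Walk.nil, by simp, ?_⟩
    simp [Walk.totalColorSeq, List.interleaveTPC, seqL]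
  | x :: l', a, b, hc => by
    rw [List.cons_append] at hc
    change List.IsChain G.Adj _ at hc
    rw [List.isChain_cons_cons] at hc
    obtain ⟨q', hsup, hseq⟩ := exists_walk_aux cV cE l' x b hc.2
    have htail : q'.support.tail ≠ [] := by
      rw [hsup]; simp
    refine ⟨Walk.cons hc.1 q', by simp [hsup], ?_⟩
    rw [tcs_cons cV cE hc.1 q' htail, hseq, List.cons_append, seqL_cons]

lemma gec {β : Type*} (l : List β) {i j : ℕ} (h : i = j) {hi : i < l.length} :
    l[i]'hi = l[j]'(h ▸ hi) := by subst h; rfl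

lemma seqL_getElem? (cV : V → α) (cE : Sym2 V → α) :
    ∀ (l : List V) (t : ℕ) (x : α), (seqL cV cE l)[t]? = some x →
      ∃ h : t / 2 + 1 < l.length,
        (t % 2 = 0 → x = cE s(l[t / 2]'(by omega), l[t / 2 + 1]'h)) ∧
        (t % 2 = 1 → x = cV (l[t / 2 + 1]'h) ∧ t / 2 + 2 < l.length)
  | [], t, x, h => by simp [seqL] at h
  | [a], t, x, h => by simp [seqL] at h
  | [a, b], t, x, h => by
    rcases t with _ | t
    · simp [seqL] at h
      exact ⟨by simp, fun _ => by simp [← h], fun h1 => by simp at h1⟩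
    · simp [seqL] at h
  | a :: b :: c :: l', t, x, h => by
    rcases t with _ | t
    · simp [seqL] at h
      exact ⟨by simp only [List.length_cons]; omega, fun _ => by simp [← h],
        fun h1 => by simp at h1⟩
    rcases t with _ | t
    · simp [seqL] at h
      exact ⟨by simp only [List.length_cons]; omega, fun h1 => by simp at h1,
        fun _ => ⟨by simp [← h], by simp only [List.length_cons]; omega⟩⟩
    · have h' : (seqL cV cE (b :: c :: l'))[t]? = some x := by
        simpa [seqL] using h
      obtain ⟨hb, he, ho⟩ := seqL_getElem? cV cE (b :: c :: l') t x h'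
      have hdiv : (t + 1 + 1) / 2 = t / 2 + 1 := by omega
      have hdiv2 : (t + 1 + 1) / 2 + 1 = t / 2 + 2 := by omega
      have hmod : (t + 1 + 1) % 2 = t % 2 := by omega
      simp only [List.length_cons] at hb
      refine ⟨by simp only [List.length_cons]; omega, ?_, ?_⟩
      · intro hp
        rw [hmod] at hp
        rw [gec _ hdiv, gec _ hdiv2]
        simpa using he hp
      · intro hp
        rw [hmod] at hp
        obtain ⟨hx, hl⟩ := ho hp
        rw [gec _ hdiv2]
        simp only [List.length_cons] at hl
        exact ⟨by simpa using hx, by simp only [List.length_cons]; omega⟩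


lemma isTotalProper_of_affine {u v : V} (cV : V → Fin 3) (cE : Sym2 V → Fin 3)
    (q : G.Walk u v) (c ε : ℤ) (hε : ε = 1 ∨ ε = -1)
    (h : ∀ (t : ℕ) (x : Fin 3), (q.totalColorSeq cV cE)[t]? = some x →
      (x.val : ℤ) % 3 = (c + ε * t) % 3) : q.IsTotalProper cV cE := by
  intro i a b ha hb heq
  have h1 := h i a ha
  have ha3 := a.isLt
  have hb3 := b.isLt
  have hv : a.val = b.val := congrArg Fin.val heq
  rcases hb with hb | hb
  · have h2 := h (i + 1) b hb
    push_cast at h1 h2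
    rcases hε with rfl | rfl <;> omega
  · have h2 := h (i + 2) b hb
    push_cast at h1 h2
    rcases hε with rfl | rfl <;> omega

lemma exists_tp_walk (cV : V → Fin 3) (cE : Sym2 V → Fin 3) (s : List V) (hs : s.Nodup)
    (d : V) (ι : ℕ → ℕ) (m : ℕ) (hm : 1 ≤ m)
    (hι : ∀ t, t ≤ m → ι t < s.length)
    (hmono : ∀ t t', t ≤ m → t' ≤ m → ι t = ι t' → t = t')
    (hadj : ∀ t, t + 1 ≤ m → G.Adj (s.getD (ι t) d) (s.getD (ι (t + 1)) d))
    (c ε : ℤ) (hε : ε = 1 ∨ ε = -1)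
    (hcol : ∀ t, t + 1 ≤ m →
      ((cE s(s.getD (ι t) d, s.getD (ι (t + 1)) d)).val : ℤ) % 3 = (c + ε * (2 * t)) % 3)
    (hcolV : ∀ t, 1 ≤ t → t + 1 ≤ m →
      ((cV (s.getD (ι t) d)).val : ℤ) % 3 = (c + ε * (2 * t) - ε) % 3)
    (a b : V) (hga : s.getD (ι 0) d = a) (hgb : s.getD (ι m) d = b) :
    ∃ q : G.Walk a b, q.IsPath ∧ q.IsTotalProper cV cE := by
  obtain ⟨m', rfl⟩ : ∃ m', m = m' + 1 := ⟨m - 1, by omega⟩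
  have hsplit : (List.range (m' + 1 + 1)).map (fun k => s.getD (ι k) d)
      = a :: (((List.range m').map fun k => s.getD (ι (k + 1)) d) ++ [b]) := by
    rw [← hga, ← hgb, List.range_succ, List.map_append, List.range_succ_eq_map,
      List.map_cons, List.map_map]
    rfl
  have hfk : ∀ (k : ℕ) (hk : k < m' + 1 + 1),
      ((List.range (m' + 1 + 1)).map (fun k => s.getD (ι k) d))[k]'(by simpa using hk)
        = s.getD (ι k) d := by
    intro k hk
    simp
  have hChainL : ((List.range (m' + 1 + 1)).map (fun k => s.getD (ι k) d)).Chain' G.Adj := by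
    change List.IsChain G.Adj _
    rw [List.isChain_iff_getElem]
    intro k hk
    simp only [List.length_map, List.length_range] at hk
    simp only [List.get_eq_getElem, List.getElem_map, List.getElem_range]
    exact hadj k (by omega)
  have hNodup : ((List.range (m' + 1 + 1)).map (fun k => s.getD (ι k) d)).Nodup := by
    rw [List.nodup_iff_injective_getElem]
    rintro ⟨k, hk⟩ ⟨k', hk'⟩ hkk
    simp only [List.length_map, List.length_range] at hk hk'
    simp only [List.getElem_map, List.getElem_range] at hkk
    rw [List.getD_eq_getElem s d (hι k (by omega)),
      List.getD_eq_getElem s d (hι k' (by omega))] at hkk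
    have hinj := List.nodup_iff_injective_getElem.mp hs
    have := hinj (a₁ := ⟨ι k, hι k (by omega)⟩) (a₂ := ⟨ι k', hι k' (by omega)⟩) hkk
    have hii : ι k = ι k' := congrArg Fin.val this
    exact Fin.ext (hmono k k' (by omega) (by omega) hii)
  obtain ⟨q, hsup, hseq⟩ := exists_walk_aux cV cE
    ((List.range m').map fun k => s.getD (ι (k + 1)) d) a b (hsplit ▸ hChainL)
  refine ⟨q, ?_, ?_⟩
  · rw [Walk.isPath_def, hsup, ← hsplit]
    exact hNodup
  · apply isTotalProper_of_affine cV cE q c ε hε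
    intro t x hx
    rw [hseq, ← hsplit] at hx
    obtain ⟨h1, he, ho⟩ := seqL_getElem? cV cE _ t x hx
    simp only [List.length_map, List.length_range] at h1
    rcases Nat.mod_two_eq_zero_or_one t with hp | hp
    · have hxe := he hp
      rw [hfk (t / 2) (by omega), hfk (t / 2 + 1) (by omega)] at hxe
      have hc := hcol (t / 2) (by omega)
      rw [hxe]
      rcases hε with rfl | rfl <;> push_cast at hc ⊢ <;> omega
    · obtain ⟨hxo, hlen⟩ := ho hp
      simp only [List.length_map, List.length_range] at hlen
      rw [hfk (t / 2 + 1) (by omega)] at hxo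
      have hc := hcolV (t / 2 + 1) (by omega) (by omega)
      rw [hxo]
      rcases hε with rfl | rfl <;> push_cast at hc ⊢ <;> omega


lemma mem_three [DecidableEq V] {u v : V} (p : G.Walk u v) (hp : ∀ w, p.support.count w = 1) :
    ∃ (cV : V → Fin 3) (cE : Sym2 V → Fin 3),
      ∀ a b : V, a ≠ b → ∃ q : G.Walk a b, q.IsPath ∧ q.IsTotalProper cV cE := by
  have hs : p.support.Nodup := List.nodup_iff_count_le_one.mpr fun w => (hp w).le
  have hmem : ∀ w : V, w ∈ p.support := fun w => List.count_pos_iff.mp (by rw [hp w]; norm_num)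
  have hchain : p.support.Chain' G.Adj := p.isChain_adj_support
  refine ⟨fun w => ⟨(2 * p.support.idxOf w + 2) % 3, by omega⟩,
    Sym2.lift ⟨fun a b => ⟨(2 * min (p.support.idxOf a) (p.support.idxOf b)) % 3, by omega⟩,
      fun a b => by simp [Nat.min_comm]⟩, ?_⟩
  intro a b hne
  have hi : p.support.idxOf a < p.support.length := List.idxOf_lt_length_iff.mpr (hmem a)
  have hj : p.support.idxOf b < p.support.length := List.idxOf_lt_length_iff.mpr (hmem b)
  set i := p.support.idxOf a with hidef
  set j := p.support.idxOf b with hjdef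
  have hij : i ≠ j := by
    intro h
    apply hne
    rw [← List.getElem_idxOf hi, ← List.getElem_idxOf hj]
    exact gec _ h
  rcases lt_or_gt_of_ne hij with hlt | hgt
  · refine exists_tp_walk _ _ p.support hs a (fun t => i + t) (j - i) (by omega)
      (fun t ht => by omega) (fun t t' _ _ h => by omega) ?_ (2 * (i : ℤ)) 1 (Or.inl rfl)
      ?_ ?_ a b ?_ ?_
    · intro t ht
      have h1 : i + t < p.support.length - 1 := by omega
      have := List.isChain_iff_getElem.mp hchain (i + t) (by omega)
      rw [List.getD_eq_getElem p.support a (show i + t < p.support.length by omega),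
        List.getD_eq_getElem p.support a (show i + (t + 1) < p.support.length by omega)]
      rw [gec p.support (show i + (t + 1) = (i + t) + 1 by omega)]
      exact this
    · intro t ht
      rw [List.getD_eq_getElem p.support a (show i + t < p.support.length by omega),
        List.getD_eq_getElem p.support a (show i + (t + 1) < p.support.length by omega)]
      simp only [Sym2.lift_mk]
      rw [List.Nodup.idxOf_getElem hs, List.Nodup.idxOf_getElem hs]
      rw [Nat.min_eq_left (by omega)]
      push_cast
      omega
    · intro t h1t ht
      rw [List.getD_eq_getElem p.support a (show i + t < p.support.length by omega)]
      simp only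
      rw [List.Nodup.idxOf_getElem hs]
      push_cast
      omega
    · rw [List.getD_eq_getElem p.support a (show i + 0 < p.support.length by omega)]
      rw [gec p.support (show i + 0 = i by omega)]
      exact List.getElem_idxOf hi
    · rw [List.getD_eq_getElem p.support a
        (show i + (j - i) < p.support.length by omega)]
      rw [gec p.support (show i + (j - i) = j by omega)]
      exact List.getElem_idxOf hj
  · refine exists_tp_walk _ _ p.support hs a (fun t => i - t) (i - j) (by omega)
      (fun t ht => by omega) (fun t t' h1 h2 h => by omega) ?_ (2 * (i : ℤ) - 2) (-1)
      (Or.inr rfl) ?_ ?_ a b ?_ ?_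
    · intro t ht
      have h1 : i - (t + 1) < p.support.length - 1 := by omega
      have := List.isChain_iff_getElem.mp hchain (i - (t + 1)) (by omega)
      rw [gec p.support (show i - (t + 1) + 1 = i - t by omega)] at this
      rw [List.getD_eq_getElem p.support a (show i - t < p.support.length by omega),
        List.getD_eq_getElem p.support a (show i - (t + 1) < p.support.length by omega)]
      exact this.symm
    · intro t ht
      rw [List.getD_eq_getElem p.support a (show i - t < p.support.length by omega),
        List.getD_eq_getElem p.support a (show i - (t + 1) < p.support.length by omega)]
      simp only [Sym2.lift_mk]
      rw [List.Nodup.idxOf_getElem hs, List.Nodup.idxOf_getElem hs]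
      rw [Nat.min_eq_right (by omega)]
      push_cast
      omega
    · intro t h1t ht
      rw [List.getD_eq_getElem p.support a (show i - t < p.support.length by omega)]
      simp only
      rw [List.Nodup.idxOf_getElem hs]
      push_cast
      omega
    · rw [List.getD_eq_getElem p.support a (show i - 0 < p.support.length by omega)]
      rw [gec p.support (show i - 0 = i by omega)]
      exact List.getElem_idxOf hi
    · rw [List.getD_eq_getElem p.support a
        (show i - (i - j) < p.support.length by omega)]
      rw [gec p.support (show i - (i - j) = j by omega)]
      exact List.getElem_idxOf hj


lemma three_le_of (k : ℕ) (cV : V → Fin k) (cE : Sym2 V → Fin k) (hcol : G.IsTPCColoring cV cE)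
    {u v : V} (hne : u ≠ v) (hnadj : ¬ G.Adj u v) : 3 ≤ k := by
  obtain ⟨q, _, hqt⟩ := hcol u v hne
  have h2 : 2 ≤ q.length := by
    cases q with
    | nil => exact absurd rfl hne
    | cons h r =>
      rcases Nat.eq_zero_or_pos r.length with h0 | h1
      · exact absurd ((Walk.eq_of_length_eq_zero h0) ▸ h) hnadj
      · simp only [Walk.length_cons]; omega
  have he : q.edges.length = q.length := q.length_edges
  have hsl : q.support.length = q.length + 1 := q.length_support
  rcases hq : q.edges with _ | ⟨e0, es0⟩
  · rw [hq] at he; simp at he; omega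
  rcases hes : es0 with _ | ⟨e1, es⟩
  · rw [hq, hes] at he; simp at he; omega
  rcases hw : q.support.tail.dropLast with _ | ⟨w0, ws⟩
  · have := congrArg List.length hw
    simp [List.length_dropLast, List.length_tail, hsl] at this
    omega
  have hseq : q.totalColorSeq cV cE
      = cE e0 :: cV w0 :: cE e1 :: ((ws.map cV).interleaveTPC (es.map cE)) := by
    unfold Walk.totalColorSeq
    rw [hq, hes, hw]
    simp [List.interleaveTPC]
  have h01 : cE e0 ≠ cV w0 := hqt 0 _ _ (by rw [hseq]; rfl) (Or.inl (by rw [hseq]; rfl))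
  have h02 : cE e0 ≠ cE e1 := hqt 0 _ _ (by rw [hseq]; rfl) (Or.inr (by rw [hseq]; simp))
  have h12 : cV w0 ≠ cE e1 := hqt 1 _ _ (by rw [hseq]; rfl) (Or.inl (by rw [hseq]; simp))
  have v01 : (cE e0).val ≠ (cV w0).val := fun h => h01 (Fin.ext h)
  have v02 : (cE e0).val ≠ (cE e1).val := fun h => h02 (Fin.ext h)
  have v12 : (cV w0).val ≠ (cE e1).val := fun h => h12 (Fin.ext h)
  have := (cE e0).isLt; have := (cV w0).isLt; have := (cE e1).isLt
  omega

end SimpleGraph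

open SimpleGraph in
theorem tpc_traceable {V : Type*} [DecidableEq V] (G : SimpleGraph V)
    (htr : ∃ (u v : V) (p : G.Walk u v), p.IsHamiltonian) (hnc : G ≠ ⊤) :
    G.tpc = 3 := by
  obtain ⟨u, v, p, hp⟩ := htr
  obtain ⟨u0, v0, hne0, hnadj⟩ : ∃ a b : V, a ≠ b ∧ ¬ G.Adj a b := by
    by_contra h
    push_neg at h
    exact hnc (by ext x y; simp only [top_adj]; exact ⟨fun hxy => hxy.ne, fun hxy => h x y hxy⟩)
  obtain ⟨cV3, cE3, hcol3⟩ := SimpleGraph.mem_three p hp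
  have h3 : 3 ∈ {k | ∃ (cV : V → Fin k) (cE : Sym2 V → Fin k), G.IsTPCColoring cV cE} :=
    ⟨cV3, cE3, hcol3⟩
  have hlb : ∀ k ∈ {k | ∃ (cV : V → Fin k) (cE : Sym2 V → Fin k), G.IsTPCColoring cV cE},
      3 ≤ k := by
    rintro k ⟨cV, cE, hcol⟩
    exact SimpleGraph.three_le_of k cV cE hcol hne0 hnadj
  exact le_antisymm (Nat.sInf_le h3) (le_csInf ⟨3, h3⟩ hlb)
end

section
/- Let H be a connected graph obtained from the complete bipartite graph K_{s,t} (s ≥ t ≥ 2) by adding one new vertex v joined by at least one edge to K_{s,t}. Then tpc(H) = 3. -/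
theorem List.length_interleaveTPC {α : Type*} :
    ∀ xs ys : List α, (xs.interleaveTPC ys).length = xs.length + ys.length
  | [], ys => by simp [List.interleaveTPC]
  | x :: xs, ys => by
      simp [List.interleaveTPC, List.length_interleaveTPC ys xs]; omega
termination_by xs ys => xs.length + ys.length

def ok3 {α : Type*} [DecidableEq α] : List α → Bool
  | a :: b :: c :: l => decide (a ≠ b) && decide (a ≠ c) && ok3 (b :: c :: l)
  | [a, b] => decide (a ≠ b)
  | _ => true

theorem ok3_tail {α : Type*} [DecidableEq α] {x : α} {l : List α}
    (h : ok3 (x :: l) = true) : ok3 l = true := by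
  match l with
  | [] => rfl
  | [a] => rfl
  | a :: b :: l => simp [ok3] at h ⊢; exact h.2

theorem ok3_ne1 {α : Type*} [DecidableEq α] {a b : α} {l : List α}
    (h : ok3 (a :: l) = true) (hb : l[0]? = some b) : a ≠ b := by
  match l with
  | [] => simp at hb
  | [c] => simp at hb; subst hb; simpa [ok3] using h
  | c :: d :: l => simp at hb; subst hb; simp [ok3] at h; exact h.1.1

theorem ok3_ne2 {α : Type*} [DecidableEq α] {a b : α} {l : List α}
    (h : ok3 (a :: l) = true) (hb : l[1]? = some b) : a ≠ b := by
  match l with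
  | [] => simp at hb
  | [c] => simp at hb
  | c :: d :: l => simp at hb; subst hb; simp [ok3] at h; exact h.1.2

theorem ok3_spec {α : Type*} [DecidableEq α] : ∀ (l : List α), ok3 l = true →
    ∀ i a b, l[i]? = some a → (l[i+1]? = some b ∨ l[i+2]? = some b) → a ≠ b := by
  intro l
  induction l with
  | nil => intro _ i a b ha _; simp at ha
  | cons x l ih =>
    intro hok i a b ha hb
    match i with
    | 0 =>
      simp at ha; subst ha
      rcases hb with hb | hb
      · exact ok3_ne1 hok (by simpa using hb)
      · exact ok3_ne2 hok (by simpa using hb)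
    | (i+1) =>
      refine ih (ok3_tail hok) i a b (by simpa using ha) ?_
      rcases hb with hb | hb
      · exact Or.inl (by simpa using hb)
      · exact Or.inr (by simpa using hb)

theorem SimpleGraph.Walk.IsTotalProper.of_ok3 {V α : Type*} [DecidableEq α] {G : SimpleGraph V}
    {u v : V} {cV : V → α} {cE : Sym2 V → α} {p : G.Walk u v}
    (h : ok3 (p.totalColorSeq cV cE) = true) : p.IsTotalProper cV cE :=
  fun i a b ha hb => ok3_spec _ h i a b ha hb

open SimpleGraph in
/-- Transport a TPC coloring along an equivalence of vertex types. -/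
theorem isTPCColoring_comap {V W : Type*} {n : ℕ} (e : V ≃ W) (H : SimpleGraph V)
    (cV : W → Fin n) (cE : Sym2 W → Fin n)
    (h : (H.comap ⇑e.symm).IsTPCColoring cV cE) :
    H.IsTPCColoring (fun v => cV (e v)) (fun z => cE (Sym2.map ⇑e z)) := by
  intro u v huv
  obtain ⟨p, hp, htp⟩ := h (e u) (e v) (fun hh => huv (e.injective hh))
  let f : (H.comap ⇑e.symm) →g H := ⟨⇑e.symm, fun h => h⟩
  have h1 : e.symm (e u) = u := e.symm_apply_apply u
  have h2 : e.symm (e v) = v := e.symm_apply_apply v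
  refine ⟨(p.map f).copy h1 h2, ?_, ?_⟩
  · rw [SimpleGraph.Walk.isPath_copy]
    exact SimpleGraph.Walk.map_isPath_of_injective (e.symm.injective) hp
  · have hseq : ((p.map f).copy h1 h2).totalColorSeq (fun v => cV (e v))
        (fun z => cE (Sym2.map ⇑e z)) = p.totalColorSeq cV cE := by
      simp only [Walk.totalColorSeq, Walk.edges_copy, Walk.support_copy, Walk.edges_map,
        Walk.support_map, List.map_map]
      congr 1
      · apply List.map_congr_left
        intro z _
        simp only [Function.comp_apply, Sym2.map_map]
        congr 1
        have : (fun x => e (f x)) = id := funext fun x => e.apply_symm_apply x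
        rw [this, Sym2.map_id, id]
      · rw [← List.map_tail, ← List.map_dropLast, List.map_map]
        apply List.map_congr_left
        intro x _
        show cV (e (e.symm x)) = cV x
        rw [e.apply_symm_apply]
    intro i a b ha hb
    rw [hseq] at ha hb
    exact htp i a b ha hb

open SimpleGraph in
theorem lb_three {V : Type*} {H : SimpleGraph V} {u v : V} (huv : u ≠ v)
    (hnadj : ¬ H.Adj u v) {n : ℕ}
    (cV : V → Fin n) (cE : Sym2 V → Fin n) (h : H.IsTPCColoring cV cE) : 3 ≤ n := by
  obtain ⟨p, hp, htp⟩ := h u v huv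
  have hlen : 2 ≤ p.length := by
    cases p with
    | nil => exact absurd rfl huv
    | cons ha q =>
      cases q with
      | nil => exact absurd ha hnadj
      | cons hb q' => simp [Walk.length_cons]
  have hL : 3 ≤ (p.totalColorSeq cV cE).length := by
    rw [Walk.totalColorSeq, List.length_interleaveTPC]
    simp [Walk.length_edges, Walk.length_support]
    omega
  set l := p.totalColorSeq cV cE with hl
  have h0 : l[0]? = some (l[0]'(by omega)) := List.getElem?_eq_getElem (by omega)
  have h1 : l[1]? = some (l[1]'(by omega)) := List.getElem?_eq_getElem (by omega)
  have h2 : l[2]? = some (l[2]'(by omega)) := List.getElem?_eq_getElem (by omega)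
  have hab := htp 0 _ _ h0 (Or.inl h1)
  have hac := htp 0 _ _ h0 (Or.inr h2)
  have hbc := htp 1 _ _ h1 (Or.inl h2)
  have hcard : ({l[0]'(by omega), l[1]'(by omega), l[2]'(by omega)} : Finset (Fin n)).card = 3 := by
    rw [Finset.card_insert_of_notMem (by simp [hab, hac]),
      Finset.card_insert_of_notMem (by simp [hbc]), Finset.card_singleton]
  calc 3 = _ := hcard.symm
    _ ≤ Fintype.card (Fin n) := Finset.card_le_univ _
    _ = n := Fintype.card_fin n

def Mcol {s t : ℕ} (k k' : Fin s) (b0 : Fin t) (i : Fin s) (j : Fin t) : Fin 3 :=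
  if i = k then (if j = b0 then 1 else 2) else if i = k' then (if j = b0 then 0 else 2) else 0

def fcol {s t : ℕ} (k k' : Fin s) (b0 : Fin t) :
    Option (Fin s ⊕ Fin t) → Option (Fin s ⊕ Fin t) → Fin 3
  | some (Sum.inl i), some (Sum.inr j) => Mcol k k' b0 i j
  | some (Sum.inr j), some (Sum.inl i) => Mcol k k' b0 i j
  | none, _ => 2
  | _, none => 2
  | _, _ => 0

theorem fcol_symm {s t : ℕ} (k k' : Fin s) (b0 : Fin t) :
    ∀ a b, fcol k k' b0 a b = fcol k k' b0 b a := by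
  rintro (_ | (i | j)) (_ | (i' | j')) <;> rfl

def cVcol {s t : ℕ} (k' : Fin s) (b0 b1 : Fin t) : Option (Fin s ⊕ Fin t) → Fin 3
  | none => 0
  | some (Sum.inl i) => if i = k' then 1 else 0
  | some (Sum.inr j) => if j = b0 then 2 else if j = b1 then 1 else 0

theorem ok3_singleton {α : Type*} [DecidableEq α] (a : α) : ok3 [a] = true := rfl

open SimpleGraph in
theorem ub_aux {s t : ℕ}
    (H : SimpleGraph (Option (Fin s ⊕ Fin t)))
    (hind : ∀ a b : Fin s ⊕ Fin t,
      H.Adj (some a) (some b) ↔ (completeBipartiteGraph (Fin s) (Fin t)).Adj a b)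
    (k k' : Fin s) (hk'k : k' ≠ k) (b0 b1 : Fin t) (hb01 : b0 ≠ b1)
    (hw : H.Adj none (some (Sum.inl k))) :
    ∃ (cV : Option (Fin s ⊕ Fin t) → Fin 3) (cE : Sym2 (Option (Fin s ⊕ Fin t)) → Fin 3),
      H.IsTPCColoring cV cE := by
  have hAB : ∀ i j, H.Adj (some (Sum.inl i)) (some (Sum.inr j)) :=
    fun i j => (hind _ _).2 (by simp)
  have hBA : ∀ j i, H.Adj (some (Sum.inr j)) (some (Sum.inl i)) := fun j i => (hAB i j).symm
  have hwk : H.Adj (some (Sum.inl k)) none := hw.symm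
  have hkk' : k ≠ k' := hk'k.symm
  have hb10 : b1 ≠ b0 := hb01.symm
  refine ⟨cVcol k' b0 b1, Sym2.lift ⟨fcol k k' b0, fcol_symm k k' b0⟩, ?_⟩
  rintro (_ | (i | j)) (_ | (i' | j')) huv
  · exact absurd rfl huv
  · -- none → A i'
    by_cases hik : i' = k
    · have hw' : H.Adj none (some (Sum.inl i')) := by rw [hik]; exact hw
      refine ⟨.cons hw' .nil, by simp [Walk.isPath_def], .of_ok3 ?_⟩
      simp [Walk.totalColorSeq, List.interleaveTPC, fcol, hk'k, hkk', hb01, hb10]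
      decide
    · refine ⟨.cons hw (.cons (hAB k b0) (.cons (hBA b0 i') .nil)), ?_, .of_ok3 ?_⟩
      · simp [Walk.isPath_def, hik, Ne.symm hik]
      · simp [Walk.totalColorSeq, List.interleaveTPC, fcol, Mcol, cVcol, hik, hk'k, hkk', hb01, hb10]
        decide
  · -- none → B j'
    by_cases hjb : j' = b0
    · refine ⟨.cons hw (.cons (hAB k j') .nil), ?_, .of_ok3 ?_⟩
      · simp [Walk.isPath_def]
      · simp [Walk.totalColorSeq, List.interleaveTPC, fcol, Mcol, cVcol, hjb, hkk', hk'k, hb01, hb10]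
        decide
    · refine ⟨.cons hw (.cons (hAB k b0) (.cons (hBA b0 k') (.cons (hAB k' j') .nil))), ?_, .of_ok3 ?_⟩
      · simp [Walk.isPath_def, hkk', hk'k, hjb, Ne.symm hjb]
      · simp [Walk.totalColorSeq, List.interleaveTPC, fcol, Mcol, cVcol, hk'k, hkk', hjb, hb01, hb10]
        decide
  · -- A i → none
    by_cases hik : i = k
    · have hw' : H.Adj (some (Sum.inl i)) none := by rw [hik]; exact hwk
      refine ⟨.cons hw' .nil, by simp [Walk.isPath_def], .of_ok3 ?_⟩
      simp [Walk.totalColorSeq, List.interleaveTPC, fcol, hk'k, hkk', hb01, hb10]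
      decide
    · refine ⟨.cons (hAB i b0) (.cons (hBA b0 k) (.cons hwk .nil)), ?_, .of_ok3 ?_⟩
      · simp [Walk.isPath_def, hik, Ne.symm hik]
      · simp [Walk.totalColorSeq, List.interleaveTPC, fcol, Mcol, cVcol, hik, hk'k, hkk', hb01, hb10]
        decide
  · -- A i → A i'
    have hii' : i ≠ i' := by simpa using huv
    by_cases hik : i = k
    · by_cases hi'k' : i' = k'
      · refine ⟨.cons (hAB i b0) (.cons (hBA b0 i') .nil), ?_, .of_ok3 ?_⟩
        · simp [Walk.isPath_def, hii', Ne.symm hii']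
        · simp [Walk.totalColorSeq, List.interleaveTPC, fcol, Mcol, cVcol, hik, hi'k', hk'k, hkk', hb01, hb10]
          decide
      · have hi'k : i' ≠ k := by rw [← hik]; exact hii'.symm
        refine ⟨.cons (hAB i b1) (.cons (hBA b1 i') .nil), ?_, .of_ok3 ?_⟩
        · simp [Walk.isPath_def, hii', Ne.symm hii']
        · simp [Walk.totalColorSeq, List.interleaveTPC, fcol, Mcol, cVcol, hik, hi'k, hi'k', hb01, hb10, hk'k, hkk']
          decide
    · by_cases hi'k : i' = k
      · by_cases hik' : i = k'
        · refine ⟨.cons (hAB i b0) (.cons (hBA b0 i') .nil), ?_, .of_ok3 ?_⟩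
          · simp [Walk.isPath_def, hii', Ne.symm hii']
          · simp [Walk.totalColorSeq, List.interleaveTPC, fcol, Mcol, cVcol, hik, hik', hi'k, hb01, hb10, hk'k, hkk']
            decide
        · refine ⟨.cons (hAB i b1) (.cons (hBA b1 i') .nil), ?_, .of_ok3 ?_⟩
          · simp [Walk.isPath_def, hii', Ne.symm hii']
          · simp [Walk.totalColorSeq, List.interleaveTPC, fcol, Mcol, cVcol, hik, hik', hi'k, hb01, hb10, hk'k, hkk']
            decide
      · by_cases hi'k' : i' = k'
        · have hik' : i ≠ k' := by rw [← hi'k']; exact hii'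
          refine ⟨.cons (hAB i b1) (.cons (hBA b1 k) (.cons (hAB k b0) (.cons (hBA b0 i') .nil))), ?_, .of_ok3 ?_⟩
          · simp [Walk.isPath_def, hik, Ne.symm hik, hii', Ne.symm hii', hi'k, Ne.symm hi'k, hb01, hb10]
          · simp [Walk.totalColorSeq, List.interleaveTPC, fcol, Mcol, cVcol, hik, hik', hi'k, hi'k', hk'k, hkk', hb01, hb10]
            decide
        · refine ⟨.cons (hAB i b0) (.cons (hBA b0 k) (.cons (hAB k b1) (.cons (hBA b1 i') .nil))), ?_, .of_ok3 ?_⟩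
          · simp [Walk.isPath_def, hik, Ne.symm hik, hi'k, Ne.symm hi'k, hii', Ne.symm hii', hb01, hb10]
          · simp [Walk.totalColorSeq, List.interleaveTPC, fcol, Mcol, cVcol, hik, hi'k, hi'k', hk'k, hkk', hb01, hb10]
            decide
  · -- A i → B j'
    refine ⟨.cons (hAB i j') .nil, by simp [Walk.isPath_def], .of_ok3 ?_⟩
    simp [Walk.totalColorSeq, List.interleaveTPC, hk'k, hkk', hb01, hb10]
    exact ok3_singleton _
  · -- B j → none
    by_cases hjb : j = b0
    · refine ⟨.cons (hBA j k) (.cons hwk .nil), ?_, .of_ok3 ?_⟩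
      · simp [Walk.isPath_def]
      · simp [Walk.totalColorSeq, List.interleaveTPC, fcol, Mcol, cVcol, hjb, hkk', hk'k, hb01, hb10]
        decide
    · refine ⟨.cons (hBA j k') (.cons (hAB k' b0) (.cons (hBA b0 k) (.cons hwk .nil))), ?_, .of_ok3 ?_⟩
      · simp [Walk.isPath_def, hjb, Ne.symm hjb, hkk', hk'k]
      · simp [Walk.totalColorSeq, List.interleaveTPC, fcol, Mcol, cVcol, hjb, hk'k, hkk', hb01, hb10]
        decide
  · -- B j → A i'
    refine ⟨.cons (hBA j i') .nil, by simp [Walk.isPath_def], .of_ok3 ?_⟩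
    simp [Walk.totalColorSeq, List.interleaveTPC, hk'k, hkk', hb01, hb10]
    exact ok3_singleton _
  · -- B j → B j'
    have hjj' : j ≠ j' := by simpa using huv
    by_cases hj'b : j' = b0
    · have hjb : j ≠ b0 := by rw [← hj'b]; exact hjj'
      refine ⟨.cons (hBA j k') (.cons (hAB k' j') .nil), ?_, .of_ok3 ?_⟩
      · simp [Walk.isPath_def, hjj', Ne.symm hjj']
      · simp [Walk.totalColorSeq, List.interleaveTPC, fcol, Mcol, cVcol, hjb, hj'b, hk'k, hkk', hb01, hb10]
        decide
    · by_cases hjb : j = b0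
      · refine ⟨.cons (hBA j k') (.cons (hAB k' j') .nil), ?_, .of_ok3 ?_⟩
        · simp [Walk.isPath_def, hjj', Ne.symm hjj']
        · simp [Walk.totalColorSeq, List.interleaveTPC, fcol, Mcol, cVcol, hjb, hj'b, hk'k, hkk', hb01, hb10]
          decide
      · refine ⟨.cons (hBA j k') (.cons (hAB k' b0) (.cons (hBA b0 k) (.cons (hAB k j') .nil))), ?_, .of_ok3 ?_⟩
        · simp [Walk.isPath_def, hjb, Ne.symm hjb, hj'b, Ne.symm hj'b, hjj', Ne.symm hjj', hkk', hk'k]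
        · simp [Walk.totalColorSeq, List.interleaveTPC, fcol, Mcol, cVcol, hjb, hj'b, hk'k, hkk', hb01, hb10]
          decide

open SimpleGraph in
theorem tpc_completeBipartite_add_vertex (s t : ℕ) (hts : t ≤ s) (ht : 2 ≤ t)
    (H : SimpleGraph (Option (Fin s ⊕ Fin t)))
    (hind : ∀ a b : Fin s ⊕ Fin t,
      H.Adj (some a) (some b) ↔ (completeBipartiteGraph (Fin s) (Fin t)).Adj a b)
    (hconn : H.Connected) : H.tpc = 3 := by
  have hs : 2 ≤ s := le_trans ht hts
  have h0s : 0 < s := by omega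
  have h1s : 1 < s := by omega
  have h0t : 0 < t := by omega
  have h1t : 1 < t := by omega
  have hnbr : ∃ x, H.Adj none (some x) := by
    obtain ⟨p⟩ := hconn.preconnected none (some (Sum.inl ⟨0, h0s⟩))
    cases p with
    | cons ha q =>
      rename_i w
      match w, ha with
      | some x, ha => exact ⟨x, ha⟩
      | none, ha => exact absurd ha (H.loopless.irrefl none)
  have h3mem : 3 ∈ {n | ∃ (cV : Option (Fin s ⊕ Fin t) → Fin n)
      (cE : Sym2 (Option (Fin s ⊕ Fin t)) → Fin n), H.IsTPCColoring cV cE} := by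
    rcases hnbr with ⟨x, hx⟩
    rcases x with i | j
    · have hk' : (if i = (⟨0,h0s⟩ : Fin s) then (⟨1,h1s⟩ : Fin s) else ⟨0,h0s⟩) ≠ i := by
        split <;> rename_i hsp
        · rw [hsp]; simp [Fin.ext_iff]
        · exact fun hc => hsp hc.symm
      obtain ⟨cV, cE, hc⟩ := ub_aux H hind i _ hk' ⟨0,h0t⟩ ⟨1,h1t⟩ (by simp [Fin.ext_iff]) hx
      exact ⟨cV, cE, hc⟩
    · let e : Option (Fin s ⊕ Fin t) ≃ Option (Fin t ⊕ Fin s) :=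
        Equiv.optionCongr (Equiv.sumComm (Fin s) (Fin t))
      have hind' : ∀ a b : Fin t ⊕ Fin s, (H.comap ⇑e.symm).Adj (some a) (some b) ↔
          (completeBipartiteGraph (Fin t) (Fin s)).Adj a b := by
        intro a b
        show H.Adj (e.symm (some a)) (e.symm (some b)) ↔ _
        rcases a with a | a <;> rcases b with b | b <;> simp [e, ← Equiv.optionCongr_symm, hind]
      have hw' : (H.comap ⇑e.symm).Adj none (some (Sum.inl j)) := by
        show H.Adj (e.symm none) (e.symm (some (Sum.inl j)))
        simpa [e, ← Equiv.optionCongr_symm] using hx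
      have hk' : (if j = (⟨0,h0t⟩ : Fin t) then (⟨1,h1t⟩ : Fin t) else ⟨0,h0t⟩) ≠ j := by
        split <;> rename_i hsp
        · rw [hsp]; simp [Fin.ext_iff]
        · exact fun hc => hsp hc.symm
      obtain ⟨cV, cE, hc⟩ := ub_aux (H.comap ⇑e.symm) hind' j _ hk' ⟨0,h0s⟩ ⟨1,h1s⟩
        (by simp [Fin.ext_iff]) hw'
      exact ⟨_, _, isTPCColoring_comap e H cV cE hc⟩
  apply le_antisymm
  · exact Nat.sInf_le h3mem
  · refine le_csInf ⟨3, h3mem⟩ ?_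
    rintro n ⟨cV, cE, hc⟩
    refine lb_three (u := some (Sum.inl ⟨0,h0s⟩)) (v := some (Sum.inl ⟨1,h1s⟩)) ?_ ?_ cV cE hc
    · simp [Fin.ext_iff]
    · rw [hind]; simp
end

section
/- Let H_4 be the graph on n vertices obtained from a 4-cycle uvwx by attaching n − 4 pendant edges to the vertex u. Then tpc(H_4) = n − 2 if n = 5 or n = 6, and tpc(H_4) = n − 3 if n ≥ 7. -/
/-- The graph `H₄` on `n` vertices: a 4-cycle `u v w x` on vertices `0, 1, 2, 3` with `n - 4`
pendant edges attached to the vertex `u = 0`. -/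
def graphH4 (n : ℕ) : SimpleGraph (Fin n) :=
  SimpleGraph.fromRel
    (fun a b => (a.val < 4 ∧ b.val < 4 ∧ (a.val + 1) % 4 = b.val) ∨ (a.val = 0 ∧ 4 ≤ b.val))


namespace TPCAux
open SimpleGraph

/-- structural version of interleaveTPC -/
def ilv {α : Type*} : List α → List α → List α
  | [], ys => ys
  | x :: xs, [] => x :: xs
  | x :: xs, y :: ys => x :: y :: ilv xs ys

theorem interleave_eq_ilv {α : Type*} : ∀ (xs ys : List α), xs.interleaveTPC ys = ilv xs ys
  | [], ys => by simp [List.interleaveTPC, ilv]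
  | x :: xs, [] => by simp [List.interleaveTPC, ilv]
  | x :: xs, y :: ys => by
    rw [List.interleaveTPC, List.interleaveTPC, interleave_eq_ilv xs ys]; rfl

def ListOK {α : Type*} (l : List α) : Prop :=
  ∀ i a b, l[i]? = some a → (l[i + 1]? = some b ∨ l[i + 2]? = some b) → a ≠ b

instance {α : Type*} [DecidableEq α] (l : List α) : Decidable (ListOK l) := by
  apply decidable_of_iff (∀ i, (h : i < l.length) → ∀ j, (h2 : j < l.length) →
    (j = i + 1 ∨ j = i + 2) → l[i] ≠ l[j])
  constructor
  · intro H i a b ha hb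
    rw [List.getElem?_eq_some_iff] at ha
    obtain ⟨hi, rfl⟩ := ha
    rcases hb with hb | hb <;> rw [List.getElem?_eq_some_iff] at hb <;>
      obtain ⟨hj, rfl⟩ := hb
    · exact H i hi _ hj (Or.inl rfl)
    · exact H i hi _ hj (Or.inr rfl)
  · intro H i hi j hj hij
    rcases hij with rfl | rfl
    · exact H i _ _ (List.getElem?_eq_getElem hi) (Or.inl (List.getElem?_eq_getElem hj))
    · exact H i _ _ (List.getElem?_eq_getElem hi) (Or.inr (List.getElem?_eq_getElem hj))

theorem totalColorSeq_eq_ilv {V α : Type*} {G : SimpleGraph V} (cV : V → α) (cE : Sym2 V → α)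
    {u v : V} (p : G.Walk u v) :
    p.totalColorSeq cV cE = ilv (p.edges.map cE) (p.support.tail.dropLast.map cV) :=
  interleave_eq_ilv _ _

theorem isTotalProper_iff_listOK {V α : Type*} {G : SimpleGraph V} (cV : V → α) (cE : Sym2 V → α)
    {u v : V} (p : G.Walk u v) :
    p.IsTotalProper cV cE ↔ ListOK (p.totalColorSeq cV cE) := Iff.rfl

instance (n : ℕ) : DecidableRel (graphH4 n).Adj := fun a b =>
  decidable_of_iff _ (SimpleGraph.fromRel_adj _ a b).symm

instance decIsPath' {V : Type*} [DecidableEq V] {G : SimpleGraph V} {u v : V}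
    (p : G.Walk u v) : Decidable p.IsPath :=
  decidable_of_iff _ (SimpleGraph.Walk.isPath_def p).symm

instance {V α : Type*} [DecidableEq α] {G : SimpleGraph V} (cV : V → α) (cE : Sym2 V → α)
    {u v : V} (p : G.Walk u v) : Decidable (p.IsTotalProper cV cE) :=
  decidable_of_iff (ListOK (ilv (p.edges.map cE) (p.support.tail.dropLast.map cV)))
    (by rw [← totalColorSeq_eq_ilv]; exact Iff.rfl)

instance decExistsPath {V α : Type*} [DecidableEq α] [Fintype V] [DecidableEq V]
    {G : SimpleGraph V} [DecidableRel G.Adj] (cV : V → α) (cE : Sym2 V → α) (u v : V) :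
    Decidable (∃ p : G.Walk u v, p.IsPath ∧ p.IsTotalProper cV cE) := by
  apply decidable_of_iff
    (∃ p ∈ G.finsetWalkLengthLT (Fintype.card V) u v, p.support.Nodup ∧ p.IsTotalProper cV cE)
  constructor
  · rintro ⟨p, _, h1, h2⟩; exact ⟨p, (SimpleGraph.Walk.isPath_def p).mpr h1, h2⟩
  · rintro ⟨p, hp, h⟩
    exact ⟨p, mem_finsetWalkLengthLT_iff.mpr hp.length_lt,
      (SimpleGraph.Walk.isPath_def p).mp hp, h⟩

instance {V α : Type*} [DecidableEq α] [Fintype V] [DecidableEq V] {G : SimpleGraph V}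
    [DecidableRel G.Adj] (cV : V → α) (cE : Sym2 V → α) :
    Decidable (G.IsTPCColoring cV cE) :=
  inferInstanceAs (Decidable (∀ u v : V, u ≠ v → ∃ p : G.Walk u v, _ ∧ _))

/- builders -/
section builders
variable {α : Type*} {a b c d e f g : α}

lemma listOK1 : ListOK [a] := by
  intro i x y hx hy
  rcases i with _ | _ | i <;> rcases hy with hy | hy <;> simp_all

lemma listOK3 (h1 : a ≠ b) (h2 : a ≠ c) (h3 : b ≠ c) : ListOK [a, b, c] := by
  intro i x y hx hy
  rcases i with _ | _ | _ | i <;> rcases hy with hy | hy <;> simp_all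

lemma listOK5 (h1 : a ≠ b) (h2 : a ≠ c) (h3 : b ≠ c) (h4 : b ≠ d) (h5 : c ≠ d) (h6 : c ≠ e)
    (h7 : d ≠ e) : ListOK [a, b, c, d, e] := by
  intro i x y hx hy
  rcases i with _ | _ | _ | _ | _ | i <;> rcases hy with hy | hy <;> simp_all

lemma listOK7 (h1 : a ≠ b) (h2 : a ≠ c) (h3 : b ≠ c) (h4 : b ≠ d) (h5 : c ≠ d) (h6 : c ≠ e)
    (h7 : d ≠ e) (h8 : d ≠ f) (h9 : e ≠ f) (h10 : e ≠ g) (h11 : f ≠ g) :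
    ListOK [a, b, c, d, e, f, g] := by
  intro i x y hx hy
  rcases i with _ | _ | _ | _ | _ | _ | _ | i <;> rcases hy with hy | hy <;> simp_all

/- extractors -/
lemma ok3of (h : ListOK [a, b, c]) : a ≠ b ∧ a ≠ c ∧ b ≠ c :=
  ⟨h 0 _ _ rfl (Or.inl rfl), h 0 _ _ rfl (Or.inr rfl), h 1 _ _ rfl (Or.inl rfl)⟩

lemma ok5of (h : ListOK [a, b, c, d, e]) :
    a ≠ b ∧ a ≠ c ∧ b ≠ c ∧ b ≠ d ∧ c ≠ d ∧ c ≠ e ∧ d ≠ e :=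
  ⟨h 0 _ _ rfl (Or.inl rfl), h 0 _ _ rfl (Or.inr rfl), h 1 _ _ rfl (Or.inl rfl),
   h 1 _ _ rfl (Or.inr rfl), h 2 _ _ rfl (Or.inl rfl), h 2 _ _ rfl (Or.inr rfl),
   h 3 _ _ rfl (Or.inl rfl)⟩

lemma ok7of (h : ListOK [a, b, c, d, e, f, g]) :
    a ≠ b ∧ a ≠ c ∧ b ≠ c ∧ b ≠ d ∧ c ≠ d ∧ c ≠ e ∧ d ≠ e ∧ d ≠ f ∧ e ≠ f ∧ e ≠ g ∧ f ≠ g :=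
  ⟨h 0 _ _ rfl (Or.inl rfl), h 0 _ _ rfl (Or.inr rfl), h 1 _ _ rfl (Or.inl rfl),
   h 1 _ _ rfl (Or.inr rfl), h 2 _ _ rfl (Or.inl rfl), h 2 _ _ rfl (Or.inr rfl),
   h 3 _ _ rfl (Or.inl rfl), h 3 _ _ rfl (Or.inr rfl), h 4 _ _ rfl (Or.inl rfl),
   h 4 _ _ rfl (Or.inr rfl), h 5 _ _ rfl (Or.inl rfl)⟩

end builders

end TPCAux

namespace TPCAux
open SimpleGraph

variable {n : ℕ}

lemma h4_adj_iff {a b : Fin n} :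
    (graphH4 n).Adj a b ↔ a ≠ b ∧
      ((a.val < 4 ∧ b.val < 4 ∧ (a.val + 1) % 4 = b.val) ∨ (a.val = 0 ∧ 4 ≤ b.val) ∨
       (b.val < 4 ∧ a.val < 4 ∧ (b.val + 1) % 4 = a.val) ∨ (b.val = 0 ∧ 4 ≤ a.val)) := by
  rw [graphH4, SimpleGraph.fromRel_adj]
  tauto

lemma h4_adj_of {a b : Fin n}
    (h : (a.val < 4 ∧ b.val < 4 ∧ (a.val + 1) % 4 = b.val) ∨ (a.val = 0 ∧ 4 ≤ b.val) ∨
       (b.val < 4 ∧ a.val < 4 ∧ (b.val + 1) % 4 = a.val) ∨ (b.val = 0 ∧ 4 ≤ a.val)) :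
    (graphH4 n).Adj a b := by
  rw [h4_adj_iff]
  refine ⟨fun hab => ?_, h⟩
  subst hab
  omega

/-- the only neighbor of a leaf is `0`. -/
lemma leaf_adj {a y : Fin n} (ha : 4 ≤ a.val) (h : (graphH4 n).Adj a y) : y.val = 0 := by
  rw [h4_adj_iff] at h
  omega

/-- any walk ending at a leaf, starting elsewhere, visits `0`. -/
lemma zero_mem_support_of_walk_to_leaf (h5 : 5 ≤ n) {b : Fin n} (hb : 4 ≤ b.val) :
    ∀ {d : Fin n} (r : (graphH4 n).Walk d b), d ≠ b → (⟨0, by omega⟩ : Fin n) ∈ r.support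
  | d, SimpleGraph.Walk.nil, hdb => absurd rfl hdb
  | d, SimpleGraph.Walk.cons (v := e) h r, hdb => by
    by_cases he : e = b
    · subst he
      have : d.val = 0 := leaf_adj hb h.symm
      simp [SimpleGraph.Walk.support_cons]
      left
      exact Fin.ext this.symm
    · have := zero_mem_support_of_walk_to_leaf h5 hb r he
      simp [SimpleGraph.Walk.support_cons]
      right
      exact this

/-- classification of paths between distinct leaves -/
lemma walk_leaf_leaf (h5 : 5 ≤ n) {a b : Fin n} (ha : 4 ≤ a.val) (hb : 4 ≤ b.val)
    (hab : a ≠ b) (p : (graphH4 n).Walk a b) (hp : p.IsPath) :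
    ∃ (h1 : (graphH4 n).Adj a ⟨0, by omega⟩) (h2 : (graphH4 n).Adj ⟨0, by omega⟩ b),
      p = SimpleGraph.Walk.cons h1 (SimpleGraph.Walk.cons h2 SimpleGraph.Walk.nil) := by
  cases p with
  | nil => exact absurd rfl hab
  | cons h q =>
    rename_i c
    have hc : c = ⟨0, by omega⟩ := Fin.ext (leaf_adj ha h)
    subst hc
    have h0b : (⟨0, by omega⟩ : Fin n) ≠ b := by
      intro hh
      have := congrArg Fin.val hh
      simp at this
      omega
    obtain ⟨d, h2, r, rfl⟩ := SimpleGraph.Walk.exists_eq_cons_of_ne h0b q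
    by_cases hdb : d = b
    · subst hdb
      have : r = SimpleGraph.Walk.nil := by
        rw [← SimpleGraph.Walk.isPath_iff_eq_nil]
        exact hp.of_cons.of_cons
      subst this
      exact ⟨h, h2, rfl⟩
    · exfalso
      have h0 : (⟨0, by omega⟩ : Fin n) ∈ r.support :=
        zero_mem_support_of_walk_to_leaf h5 hb r hdb
      have := hp.of_cons
      rw [SimpleGraph.Walk.cons_isPath_iff] at this
      exact this.2 h0
end TPCAux

namespace TPCAux
open SimpleGraph

variable {n : ℕ} {α : Type*}

lemma leaf_constraints (h5 : 5 ≤ n) {cV : Fin n → α} {cE : Sym2 (Fin n) → α}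
    (h : (graphH4 n).IsTPCColoring cV cE)
    {a b : Fin n} (ha : 4 ≤ a.val) (hb : 4 ≤ b.val) (hab : a ≠ b) :
    cE s(a, ⟨0, by omega⟩) ≠ cV ⟨0, by omega⟩ ∧
    cE s(a, ⟨0, by omega⟩) ≠ cE s(b, ⟨0, by omega⟩) ∧
    cV ⟨0, by omega⟩ ≠ cE s(b, ⟨0, by omega⟩) := by
  obtain ⟨p, hp, hprop⟩ := h a b hab
  obtain ⟨h1, h2, rfl⟩ := walk_leaf_leaf h5 ha hb hab p hp
  rw [isTotalProper_iff_listOK] at hprop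
  rw [totalColorSeq_eq_ilv] at hprop
  have hprop' : ListOK [cE s(a, ⟨0, by omega⟩), cV ⟨0, by omega⟩, cE s(⟨0, by omega⟩, b)] :=
    hprop
  obtain ⟨A, B, C⟩ := ok3of hprop'
  rw [Sym2.eq_swap (a := (⟨0, by omega⟩ : Fin n))] at B C
  exact ⟨A, B, C⟩

lemma lower_ge (h6 : 6 ≤ n) {k : ℕ}
    (h : ∃ (cV : Fin n → Fin k) (cE : Sym2 (Fin n) → Fin k),
      (graphH4 n).IsTPCColoring cV cE) : n - 3 ≤ k := by
  obtain ⟨cV, cE, h⟩ := h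
  have h5 : 5 ≤ n := by omega
  set z : Fin n := ⟨0, by omega⟩ with hz
  let f : Fin (n - 3) → Fin k := fun i =>
    if hi : i.val + 4 < n then cE s(⟨i.val + 4, hi⟩, z) else cV z
  have hinj : Function.Injective f := by
    intro i j hij
    by_contra hne
    have hvalne : i.val ≠ j.val := fun hh => hne (Fin.ext hh)
    simp only [f] at hij
    split_ifs at hij with hi hj hj
    · exact (leaf_constraints h5 h (a := ⟨i.val + 4, hi⟩) (b := ⟨j.val + 4, hj⟩)
        (by simp) (by simp) (by simp [Fin.ext_iff]; omega)).2.1 hij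
    · -- f j = cV z; pick a second leaf distinct from leaf i
      have hj4 : j.val + 4 = n := by omega
      by_cases hi4 : i.val = 0
      · have h55 : (5 : ℕ) < n := by omega
        exact (leaf_constraints h5 h (a := ⟨i.val + 4, hi⟩) (b := ⟨5, h55⟩)
          (by simp) (by simp) (by simp [Fin.ext_iff]; omega)).1 hij
      · have h44 : (4 : ℕ) < n := by omega
        exact (leaf_constraints h5 h (a := ⟨i.val + 4, hi⟩) (b := ⟨4, h44⟩)
          (by simp) (by simp) (by simp [Fin.ext_iff]; omega)).1 hij
    · have hi4 : i.val + 4 = n := by omega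
      by_cases hj4 : j.val = 0
      · have h55 : (5 : ℕ) < n := by omega
        exact (leaf_constraints h5 h (a := ⟨j.val + 4, hj⟩) (b := ⟨5, h55⟩)
          (by simp) (by simp) (by simp [Fin.ext_iff]; omega)).1 hij.symm
      · have h44 : (4 : ℕ) < n := by omega
        exact (leaf_constraints h5 h (a := ⟨j.val + 4, hj⟩) (b := ⟨4, h44⟩)
          (by simp) (by simp) (by simp [Fin.ext_iff]; omega)).1 hij.symm
    · omega
  have := Fintype.card_le_of_injective f hinj
  simpa using this

/-- lower bound for `n = 5`: three pairwise distinct colors are needed. -/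
lemma lower5 {k : ℕ}
    (h : ∃ (cV : Fin 5 → Fin k) (cE : Sym2 (Fin 5) → Fin k),
      (graphH4 5).IsTPCColoring cV cE) : 3 ≤ k := by
  obtain ⟨cV, cE, h⟩ := h
  obtain ⟨p, hp, hprop⟩ := h 4 2 (by decide)
  -- p has length at least 2
  obtain ⟨c, h1, q, rfl⟩ := SimpleGraph.Walk.exists_eq_cons_of_ne (by decide) p
  have hc : c = 0 := Fin.ext (leaf_adj (by decide) h1)
  subst hc
  obtain ⟨d, h2, r, rfl⟩ := SimpleGraph.Walk.exists_eq_cons_of_ne (by decide) q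
  -- extract first three colors
  rw [isTotalProper_iff_listOK, totalColorSeq_eq_ilv] at hprop
  have hsup : r.support = d :: r.support.tail := r.support_eq_cons
  have key : ∃ t, ilv
      ((SimpleGraph.Walk.cons h1 (SimpleGraph.Walk.cons h2 r)).edges.map cE)
      ((SimpleGraph.Walk.cons h1 (SimpleGraph.Walk.cons h2 r)).support.tail.dropLast.map cV) =
      cE s(4, 0) :: cV 0 :: cE s(0, d) :: t := by
    simp only [SimpleGraph.Walk.edges_cons, SimpleGraph.Walk.support_cons, List.map_cons,
      List.tail_cons]
    rw [hsup]
    rcases hr : r.support.tail with _ | ⟨w, ws⟩ <;> simp [ilv] <;>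
      rcases hws : (List.map cV (List.dropLast (w :: ws))) with _ | ⟨y, ys⟩ <;> simp [ilv]
  obtain ⟨t, ht⟩ := key
  rw [ht] at hprop
  have d1 : cE s(4, 0) ≠ cV 0 := hprop 0 _ _ rfl (Or.inl rfl)
  have d2 : cE s(4, 0) ≠ cE s(0, d) := hprop 0 _ _ rfl (Or.inr (by simp))
  have d3 : cV 0 ≠ cE s(0, d) := hprop 1 _ _ rfl (Or.inl (by simp))
  -- three pairwise distinct elements of `Fin k`
  have : ({cE s(4, 0), cV 0, cE s(0, d)} : Finset (Fin k)).card = 3 := by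
    rw [Finset.card_insert_of_notMem (by simp [d1, d2]),
      Finset.card_insert_of_notMem (by simp [d3]), Finset.card_singleton]
  calc 3 = _ := this.symm
    _ ≤ (Finset.univ : Finset (Fin k)).card := Finset.card_le_univ _
    _ = k := by simp

end TPCAux

namespace TPCAux
open SimpleGraph SimpleGraph.Walk

set_option maxHeartbeats 4000000 in
lemma cls45 : ∀ p ∈ (graphH4 6).finsetWalkLengthLT 6 4 5, p.IsPath →
    (p.edges = [s(4,0), s(0,5)] ∧ p.support = [4,0,5]) := by decide

set_option maxHeartbeats 4000000 in
lemma cls42 : ∀ p ∈ (graphH4 6).finsetWalkLengthLT 6 4 2, p.IsPath →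
    (p.edges = [s(4,0), s(0,1), s(1,2)] ∧ p.support = [4,0,1,2]) ∨
    (p.edges = [s(4,0), s(0,3), s(3,2)] ∧ p.support = [4,0,3,2]) := by decide

set_option maxHeartbeats 4000000 in
lemma cls52 : ∀ p ∈ (graphH4 6).finsetWalkLengthLT 6 5 2, p.IsPath →
    (p.edges = [s(5,0), s(0,1), s(1,2)] ∧ p.support = [5,0,1,2]) ∨
    (p.edges = [s(5,0), s(0,3), s(3,2)] ∧ p.support = [5,0,3,2]) := by decide

set_option maxHeartbeats 4000000 in
lemma cls43 : ∀ p ∈ (graphH4 6).finsetWalkLengthLT 6 4 3, p.IsPath →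
    (p.edges = [s(4,0), s(0,3)] ∧ p.support = [4,0,3]) ∨
    (p.edges = [s(4,0), s(0,1), s(1,2), s(2,3)] ∧ p.support = [4,0,1,2,3]) := by decide

set_option maxHeartbeats 4000000 in
lemma cls53 : ∀ p ∈ (graphH4 6).finsetWalkLengthLT 6 5 3, p.IsPath →
    (p.edges = [s(5,0), s(0,3)] ∧ p.support = [5,0,3]) ∨
    (p.edges = [s(5,0), s(0,1), s(1,2), s(2,3)] ∧ p.support = [5,0,1,2,3]) := by decide

set_option maxHeartbeats 2000000 in
set_option synthInstance.maxSize 2000 in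
set_option synthInstance.maxHeartbeats 1000000 in
lemma fin3core : ∀ P Q R A1 A3 A12 A23 B1 B2 B3 : Fin 3,
    (P ≠ Q ∧ P ≠ R ∧ Q ≠ R) →
    ((P ≠ Q ∧ P ≠ A1 ∧ Q ≠ A1 ∧ Q ≠ B1 ∧ A1 ≠ B1 ∧ A1 ≠ A12 ∧ B1 ≠ A12) ∨
     (P ≠ Q ∧ P ≠ A3 ∧ Q ≠ A3 ∧ Q ≠ B3 ∧ A3 ≠ B3 ∧ A3 ≠ A23 ∧ B3 ≠ A23)) →
    ((R ≠ Q ∧ R ≠ A1 ∧ Q ≠ A1 ∧ Q ≠ B1 ∧ A1 ≠ B1 ∧ A1 ≠ A12 ∧ B1 ≠ A12) ∨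
     (R ≠ Q ∧ R ≠ A3 ∧ Q ≠ A3 ∧ Q ≠ B3 ∧ A3 ≠ B3 ∧ A3 ≠ A23 ∧ B3 ≠ A23)) →
    ((P ≠ Q ∧ P ≠ A3 ∧ Q ≠ A3) ∨
     (P ≠ Q ∧ P ≠ A1 ∧ Q ≠ A1 ∧ Q ≠ B1 ∧ A1 ≠ B1 ∧ A1 ≠ A12 ∧ B1 ≠ A12 ∧ B1 ≠ B2 ∧
      A12 ≠ B2 ∧ A12 ≠ A23 ∧ B2 ≠ A23)) →
    ((R ≠ Q ∧ R ≠ A3 ∧ Q ≠ A3) ∨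
     (R ≠ Q ∧ R ≠ A1 ∧ Q ≠ A1 ∧ Q ≠ B1 ∧ A1 ≠ B1 ∧ A1 ≠ A12 ∧ B1 ≠ A12 ∧ B1 ≠ B2 ∧
      A12 ≠ B2 ∧ A12 ≠ A23 ∧ B2 ≠ A23)) → False := by decide

lemma seq_eq_of_eq {α : Type*} {u v : Fin 6} {p q : (graphH4 6).Walk u v}
    (cV : Fin 6 → α) (cE : Sym2 (Fin 6) → α) (h : p = q) :
    p.totalColorSeq cV cE = q.totalColorSeq cV cE := by rw [h]

lemma lower6 {k : ℕ}
    (h : ∃ (cV : Fin 6 → Fin k) (cE : Sym2 (Fin 6) → Fin k),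
      (graphH4 6).IsTPCColoring cV cE) : 4 ≤ k := by
  obtain ⟨cV, cE, h⟩ := h
  by_contra hk4
  -- first, 3 ≤ k from the path between the leaves
  have h45 := leaf_constraints (by omega) h (a := 4) (b := 5) (by decide) (by decide) (by decide)
  have hswap40 : s((4 : Fin 6), ⟨0, by omega⟩) = s(4, 0) := rfl
  have hQ : (⟨0, by omega⟩ : Fin 6) = 0 := rfl
  rw [hswap40, hQ] at h45
  have hswap50 : s((5 : Fin 6), (0 : Fin 6)) = s(0, 5) := Sym2.eq_swap
  rw [hswap50] at h45
  obtain ⟨d1, d2, d3⟩ := h45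
  have h3k : 3 ≤ k := by
    have : ({cE s(4, 0), cV 0, cE s(0, 5)} : Finset (Fin k)).card = 3 := by
      rw [Finset.card_insert_of_notMem (by simp [d1, d2]),
        Finset.card_insert_of_notMem (by simp [d3]), Finset.card_singleton]
    calc 3 = _ := this.symm
      _ ≤ (Finset.univ : Finset (Fin k)).card := Finset.card_le_univ _
      _ = k := by simp
  have hk : k = 3 := by omega
  subst hk
  -- extract constraints from the four vertex pairs
  have swap32 : s((3 : Fin 6), (2 : Fin 6)) = s(2, 3) := Sym2.eq_swap
  have swap50 : s((5 : Fin 6), (0 : Fin 6)) = s(0, 5) := Sym2.eq_swap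
  have get42 := h 4 2 (by decide)
  have get52 := h 5 2 (by decide)
  have get43 := h 4 3 (by decide)
  have get53 := h 5 3 (by decide)
  obtain ⟨p42, hp42, ht42⟩ := get42
  obtain ⟨p52, hp52, ht52⟩ := get52
  obtain ⟨p43, hp43, ht43⟩ := get43
  obtain ⟨p53, hp53, ht53⟩ := get53
  rw [isTotalProper_iff_listOK] at ht42 ht52 ht43 ht53
  have m42 := cls42 p42 (mem_finsetWalkLengthLT_iff.mpr (by simpa using hp42.length_lt)) hp42
  have m52 := cls52 p52 (mem_finsetWalkLengthLT_iff.mpr (by simpa using hp52.length_lt)) hp52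
  have m43 := cls43 p43 (mem_finsetWalkLengthLT_iff.mpr (by simpa using hp43.length_lt)) hp43
  have m53 := cls53 p53 (mem_finsetWalkLengthLT_iff.mpr (by simpa using hp53.length_lt)) hp53
  have C42 : (cE s(4,0) ≠ cV 0 ∧ cE s(4,0) ≠ cE s(0,1) ∧ cV 0 ≠ cE s(0,1) ∧ cV 0 ≠ cV 1 ∧
      cE s(0,1) ≠ cV 1 ∧ cE s(0,1) ≠ cE s(1,2) ∧ cV 1 ≠ cE s(1,2)) ∨
      (cE s(4,0) ≠ cV 0 ∧ cE s(4,0) ≠ cE s(0,3) ∧ cV 0 ≠ cE s(0,3) ∧ cV 0 ≠ cV 3 ∧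
      cE s(0,3) ≠ cV 3 ∧ cE s(0,3) ≠ cE s(2,3) ∧ cV 3 ≠ cE s(2,3)) := by
    rcases m42 with ⟨he, hs⟩ | ⟨he, hs⟩
    · left
      have hseq : p42.totalColorSeq cV cE = [cE s(4,0), cV 0, cE s(0,1), cV 1, cE s(1,2)] := by
        rw [totalColorSeq_eq_ilv, he, hs]; rfl
      rw [hseq] at ht42
      exact ok5of ht42
    · right
      have hseq : p42.totalColorSeq cV cE = [cE s(4,0), cV 0, cE s(0,3), cV 3, cE s(3,2)] := by
        rw [totalColorSeq_eq_ilv, he, hs]; rfl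
      rw [hseq, swap32] at ht42
      exact ok5of ht42
  have C52 : (cE s(0,5) ≠ cV 0 ∧ cE s(0,5) ≠ cE s(0,1) ∧ cV 0 ≠ cE s(0,1) ∧ cV 0 ≠ cV 1 ∧
      cE s(0,1) ≠ cV 1 ∧ cE s(0,1) ≠ cE s(1,2) ∧ cV 1 ≠ cE s(1,2)) ∨
      (cE s(0,5) ≠ cV 0 ∧ cE s(0,5) ≠ cE s(0,3) ∧ cV 0 ≠ cE s(0,3) ∧ cV 0 ≠ cV 3 ∧
      cE s(0,3) ≠ cV 3 ∧ cE s(0,3) ≠ cE s(2,3) ∧ cV 3 ≠ cE s(2,3)) := by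
    rcases m52 with ⟨he, hs⟩ | ⟨he, hs⟩
    · left
      have hseq : p52.totalColorSeq cV cE = [cE s(5,0), cV 0, cE s(0,1), cV 1, cE s(1,2)] := by
        rw [totalColorSeq_eq_ilv, he, hs]; rfl
      rw [hseq, swap50] at ht52
      exact ok5of ht52
    · right
      have hseq : p52.totalColorSeq cV cE = [cE s(5,0), cV 0, cE s(0,3), cV 3, cE s(3,2)] := by
        rw [totalColorSeq_eq_ilv, he, hs]; rfl
      rw [hseq, swap50, swap32] at ht52
      exact ok5of ht52
  have C43 : (cE s(4,0) ≠ cV 0 ∧ cE s(4,0) ≠ cE s(0,3) ∧ cV 0 ≠ cE s(0,3)) ∨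
      (cE s(4,0) ≠ cV 0 ∧ cE s(4,0) ≠ cE s(0,1) ∧ cV 0 ≠ cE s(0,1) ∧ cV 0 ≠ cV 1 ∧
       cE s(0,1) ≠ cV 1 ∧ cE s(0,1) ≠ cE s(1,2) ∧ cV 1 ≠ cE s(1,2) ∧ cV 1 ≠ cV 2 ∧
       cE s(1,2) ≠ cV 2 ∧ cE s(1,2) ≠ cE s(2,3) ∧ cV 2 ≠ cE s(2,3)) := by
    rcases m43 with ⟨he, hs⟩ | ⟨he, hs⟩
    · left
      have hseq : p43.totalColorSeq cV cE = [cE s(4,0), cV 0, cE s(0,3)] := by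
        rw [totalColorSeq_eq_ilv, he, hs]; rfl
      rw [hseq] at ht43
      exact ok3of ht43
    · right
      have hseq : p43.totalColorSeq cV cE =
          [cE s(4,0), cV 0, cE s(0,1), cV 1, cE s(1,2), cV 2, cE s(2,3)] := by
        rw [totalColorSeq_eq_ilv, he, hs]; rfl
      rw [hseq] at ht43
      exact ok7of ht43
  have C53 : (cE s(0,5) ≠ cV 0 ∧ cE s(0,5) ≠ cE s(0,3) ∧ cV 0 ≠ cE s(0,3)) ∨
      (cE s(0,5) ≠ cV 0 ∧ cE s(0,5) ≠ cE s(0,1) ∧ cV 0 ≠ cE s(0,1) ∧ cV 0 ≠ cV 1 ∧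
       cE s(0,1) ≠ cV 1 ∧ cE s(0,1) ≠ cE s(1,2) ∧ cV 1 ≠ cE s(1,2) ∧ cV 1 ≠ cV 2 ∧
       cE s(1,2) ≠ cV 2 ∧ cE s(1,2) ≠ cE s(2,3) ∧ cV 2 ≠ cE s(2,3)) := by
    rcases m53 with ⟨he, hs⟩ | ⟨he, hs⟩
    · left
      have hseq : p53.totalColorSeq cV cE = [cE s(5,0), cV 0, cE s(0,3)] := by
        rw [totalColorSeq_eq_ilv, he, hs]; rfl
      rw [hseq, swap50] at ht53
      exact ok3of ht53
    · right
      have hseq : p53.totalColorSeq cV cE =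
          [cE s(5,0), cV 0, cE s(0,1), cV 1, cE s(1,2), cV 2, cE s(2,3)] := by
        rw [totalColorSeq_eq_ilv, he, hs]; rfl
      rw [hseq, swap50] at ht53
      exact ok7of ht53
  exact fin3core (cE s(4,0)) (cV 0) (cE s(0,5)) (cE s(0,1)) (cE s(0,3)) (cE s(1,2)) (cE s(2,3))
    (cV 1) (cV 2) (cV 3) ⟨d1, d2, d3⟩
    (C42.imp (fun x => x) (fun x => x)) (C52.imp (fun x => x) (fun x => x))
    (C43.imp (fun x => x) (fun x => x)) (C53.imp (fun x => x) (fun x => x))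

end TPCAux

namespace TPCAux
open SimpleGraph

section givers
variable {V : Type*} {α : Type*} {G : SimpleGraph V} {cV : V → α} {cE : Sym2 V → α}

lemma seq1 {a b : V} (h1 : G.Adj a b) :
    (SimpleGraph.Walk.cons h1 .nil).totalColorSeq cV cE = [cE s(a, b)] := by
  rw [totalColorSeq_eq_ilv]; rfl

lemma seq2 {a b c : V} (h1 : G.Adj a b) (h2 : G.Adj b c) :
    ((SimpleGraph.Walk.cons h1 (.cons h2 .nil))).totalColorSeq cV cE =
      [cE s(a, b), cV b, cE s(b, c)] := by
  rw [totalColorSeq_eq_ilv]; rfl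

lemma seq3 {a b c d : V} (h1 : G.Adj a b) (h2 : G.Adj b c) (h3 : G.Adj c d) :
    ((SimpleGraph.Walk.cons h1 (.cons h2 (.cons h3 .nil)))).totalColorSeq cV cE =
      [cE s(a, b), cV b, cE s(b, c), cV c, cE s(c, d)] := by
  rw [totalColorSeq_eq_ilv]; rfl

lemma seq4 {a b c d e : V} (h1 : G.Adj a b) (h2 : G.Adj b c) (h3 : G.Adj c d) (h4 : G.Adj d e) :
    ((SimpleGraph.Walk.cons h1 (.cons h2 (.cons h3 (.cons h4 .nil))))).totalColorSeq cV cE =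
      [cE s(a, b), cV b, cE s(b, c), cV c, cE s(c, d), cV d, cE s(d, e)] := by
  rw [totalColorSeq_eq_ilv]; rfl

lemma give1 {a b : V} (h1 : G.Adj a b) :
    ∃ p : G.Walk a b, p.IsPath ∧ p.IsTotalProper cV cE :=
  ⟨.cons h1 .nil, by simp [SimpleGraph.Walk.isPath_def, h1.ne],
    by rw [isTotalProper_iff_listOK, seq1]; exact listOK1⟩

lemma give2 {a b c : V} (h1 : G.Adj a b) (h2 : G.Adj b c) (hac : a ≠ c)
    (d1 : cE s(a, b) ≠ cV b) (d2 : cE s(a, b) ≠ cE s(b, c)) (d3 : cV b ≠ cE s(b, c)) :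
    ∃ p : G.Walk a c, p.IsPath ∧ p.IsTotalProper cV cE :=
  ⟨.cons h1 (.cons h2 .nil), by simp [SimpleGraph.Walk.isPath_def, h1.ne, h2.ne, hac],
    by rw [isTotalProper_iff_listOK, seq2]; exact listOK3 d1 d2 d3⟩

lemma give3 {a b c d : V} (h1 : G.Adj a b) (h2 : G.Adj b c) (h3 : G.Adj c d)
    (hac : a ≠ c) (had : a ≠ d) (hbd : b ≠ d)
    (d1 : cE s(a, b) ≠ cV b) (d2 : cE s(a, b) ≠ cE s(b, c)) (d3 : cV b ≠ cE s(b, c))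
    (d4 : cV b ≠ cV c) (d5 : cE s(b, c) ≠ cV c) (d6 : cE s(b, c) ≠ cE s(c, d))
    (d7 : cV c ≠ cE s(c, d)) :
    ∃ p : G.Walk a d, p.IsPath ∧ p.IsTotalProper cV cE :=
  ⟨.cons h1 (.cons h2 (.cons h3 .nil)),
    by simp [SimpleGraph.Walk.isPath_def, h1.ne, h2.ne, h3.ne, hac, had, hbd],
    by rw [isTotalProper_iff_listOK, seq3]; exact listOK5 d1 d2 d3 d4 d5 d6 d7⟩

lemma give4 {a b c d e : V} (h1 : G.Adj a b) (h2 : G.Adj b c) (h3 : G.Adj c d) (h4 : G.Adj d e)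
    (hac : a ≠ c) (had : a ≠ d) (hae : a ≠ e) (hbd : b ≠ d) (hbe : b ≠ e) (hce : c ≠ e)
    (d1 : cE s(a, b) ≠ cV b) (d2 : cE s(a, b) ≠ cE s(b, c)) (d3 : cV b ≠ cE s(b, c))
    (d4 : cV b ≠ cV c) (d5 : cE s(b, c) ≠ cV c) (d6 : cE s(b, c) ≠ cE s(c, d))
    (d7 : cV c ≠ cE s(c, d)) (d8 : cV c ≠ cV d) (d9 : cE s(c, d) ≠ cV d)
    (d10 : cE s(c, d) ≠ cE s(d, e)) (d11 : cV d ≠ cE s(d, e)) :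
    ∃ p : G.Walk a e, p.IsPath ∧ p.IsTotalProper cV cE :=
  ⟨.cons h1 (.cons h2 (.cons h3 (.cons h4 .nil))),
    by simp [SimpleGraph.Walk.isPath_def, h1.ne, h2.ne, h3.ne, h4.ne, hac, had, hae, hbd,
      hbe, hce],
    by rw [isTotalProper_iff_listOK, seq4];
       exact listOK7 d1 d2 d3 d4 d5 d6 d7 d8 d9 d10 d11⟩

end givers

/- the coloring for `n ≥ 7` -/
variable {n : ℕ}

def cVg (n : ℕ) (h7 : 7 ≤ n) : Fin n → Fin (n - 3) := fun v =>
  if v.val = 0 then ⟨n - 4, by omega⟩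
  else if v.val = 1 then ⟨2, by omega⟩
  else if v.val = 2 then ⟨3, by omega⟩
  else if v.val = 3 then ⟨2, by omega⟩
  else ⟨0, by omega⟩

def gg (n : ℕ) (h7 : 7 ≤ n) : Fin n → Fin n → Fin (n - 3) := fun a b =>
  if a.val = 0 ∧ b.val = 1 then ⟨0, by omega⟩
  else if a.val = 0 ∧ b.val = 3 then ⟨1, by omega⟩
  else if a.val = 1 ∧ b.val = 2 then ⟨1, by omega⟩
  else if a.val = 2 ∧ b.val = 3 then ⟨0, by omega⟩
  else if h : a.val = 0 ∧ 4 ≤ b.val then ⟨b.val - 4, by have := b.isLt; omega⟩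
  else ⟨0, by omega⟩

def cEg (n : ℕ) (h7 : 7 ≤ n) : Sym2 (Fin n) → Fin (n - 3) :=
  Sym2.lift ⟨fun a b => gg n h7 (min a b) (max a b), fun a b => by simp only [min_comm a b, max_comm a b]⟩

lemma cEg_mk (h7 : 7 ≤ n) {a b : Fin n} (hab : a ≤ b) :
    cEg n h7 s(a, b) = gg n h7 a b := by
  rw [cEg, Sym2.lift_mk]
  simp only [min_eq_left hab, max_eq_right hab, inf_eq_left.mpr hab, sup_eq_right.mpr hab]

lemma val_le {a b : Fin n} (h : a.val ≤ b.val) : a ≤ b := h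

lemma cEg01 (h7 : 7 ≤ n) : cEg n h7 s(⟨0, by omega⟩, ⟨1, by omega⟩) = ⟨0, by omega⟩ := by
  rw [cEg_mk h7 (val_le (by simp))]; simp [gg]

lemma cEg03 (h7 : 7 ≤ n) : cEg n h7 s(⟨0, by omega⟩, ⟨3, by omega⟩) = ⟨1, by omega⟩ := by
  rw [cEg_mk h7 (val_le (by simp))]; simp [gg]

lemma cEg12 (h7 : 7 ≤ n) : cEg n h7 s(⟨1, by omega⟩, ⟨2, by omega⟩) = ⟨1, by omega⟩ := by
  rw [cEg_mk h7 (val_le (by simp))]; simp [gg]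

lemma cEg23 (h7 : 7 ≤ n) : cEg n h7 s(⟨2, by omega⟩, ⟨3, by omega⟩) = ⟨0, by omega⟩ := by
  rw [cEg_mk h7 (val_le (by simp))]; simp [gg]

lemma cEg0L (h7 : 7 ≤ n) {l : Fin n} (hl : 4 ≤ l.val) :
    cEg n h7 s(⟨0, by omega⟩, l) = ⟨l.val - 4, by have := l.isLt; omega⟩ := by
  rw [cEg_mk h7 (val_le (by simp))]
  rw [gg, if_neg (by simp <;> omega), if_neg (by simp <;> omega), if_neg (by simp <;> omega),
    if_neg (by simp <;> omega), dif_pos ⟨rfl, hl⟩]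

lemma cVg0 (h7 : 7 ≤ n) : cVg n h7 ⟨0, by omega⟩ = ⟨n - 4, by omega⟩ := by simp [cVg]
lemma cVg1 (h7 : 7 ≤ n) : cVg n h7 ⟨1, by omega⟩ = ⟨2, by omega⟩ := by simp [cVg]
lemma cVg2 (h7 : 7 ≤ n) : cVg n h7 ⟨2, by omega⟩ = ⟨3, by omega⟩ := by simp [cVg]
lemma cVg3 (h7 : 7 ≤ n) : cVg n h7 ⟨3, by omega⟩ = ⟨2, by omega⟩ := by simp [cVg]

end TPCAux

namespace TPCAux
open SimpleGraph

variable {n : ℕ}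

set_option maxHeartbeats 1000000 in
lemma upperTPC (h7 : 7 ≤ n) : (graphH4 n).IsTPCColoring (cVg n h7) (cEg n h7) := by
  have swapE : ∀ a b : Fin n, cEg n h7 s(a, b) = cEg n h7 s(b, a) := fun a b => by
    rw [Sym2.eq_swap]
  have a01 : (graphH4 n).Adj ⟨0, by omega⟩ ⟨1, by omega⟩ :=
    h4_adj_of (Or.inl ⟨by simp, by simp, by simp⟩)
  have a12 : (graphH4 n).Adj ⟨1, by omega⟩ ⟨2, by omega⟩ :=
    h4_adj_of (Or.inl ⟨by simp, by simp, by simp⟩)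
  have a23 : (graphH4 n).Adj ⟨2, by omega⟩ ⟨3, by omega⟩ :=
    h4_adj_of (Or.inl ⟨by simp, by simp, by simp⟩)
  have a03 : (graphH4 n).Adj ⟨0, by omega⟩ ⟨3, by omega⟩ :=
    h4_adj_of (Or.inr (Or.inr (Or.inl ⟨by simp, by simp, by simp⟩)))
  have a0L : ∀ l : Fin n, 4 ≤ l.val → (graphH4 n).Adj ⟨0, by omega⟩ l := fun l hl =>
    h4_adj_of (Or.inr (Or.inl ⟨rfl, hl⟩))
  intro u v huv
  obtain ⟨uv, hup⟩ := u
  obtain ⟨vv, hvp⟩ := v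
  have hvne : uv ≠ vv := fun h => huv (Fin.ext h)
  rcases Nat.lt_or_ge uv 4 with hu | hu <;> rcases Nat.lt_or_ge vv 4 with hv | hv
  · -- both cycle vertices
    have hu' : uv = 0 ∨ uv = 1 ∨ uv = 2 ∨ uv = 3 := by omega
    have hv' : vv = 0 ∨ vv = 1 ∨ vv = 2 ∨ vv = 3 := by omega
    rcases hu' with rfl | rfl | rfl | rfl <;> rcases hv' with rfl | rfl | rfl | rfl <;>
      first
      | omega
      | exact give1 a01
      | exact give1 a01.symm
      | exact give1 a03
      | exact give1 a03.symm
      | exact give1 a12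
      | exact give1 a12.symm
      | exact give1 a23
      | exact give1 a23.symm
      | exact give2 a01 a12 (by simp)
          (by rw [cEg01 h7, cVg1 h7]; simp)
          (by rw [cEg01 h7, cEg12 h7]; simp)
          (by rw [cVg1 h7, cEg12 h7]; simp)
      | exact give2 a12.symm a01.symm (by simp)
          (by rw [swapE, cEg12 h7, cVg1 h7]; simp)
          (by rw [swapE, swapE ⟨1, by omega⟩ ⟨0, by omega⟩, cEg12 h7, cEg01 h7]; simp)
          (by rw [swapE ⟨1, by omega⟩ ⟨0, by omega⟩, cVg1 h7, cEg01 h7]; simp)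
      | exact give2 a01.symm a03 (by simp)
          (by rw [swapE, cEg01 h7, cVg0 h7]; simp [Fin.ext_iff] <;> omega)
          (by rw [swapE, cEg01 h7, cEg03 h7]; simp)
          (by rw [cVg0 h7, cEg03 h7]; simp [Fin.ext_iff] <;> omega)
      | exact give2 a03.symm a01 (by simp)
          (by rw [swapE, cEg03 h7, cVg0 h7]; simp [Fin.ext_iff] <;> omega)
          (by rw [swapE, cEg03 h7, cEg01 h7]; simp)
          (by rw [cVg0 h7, cEg01 h7]; simp [Fin.ext_iff] <;> omega)
  · -- u cycle, v leaf
    have a0v := a0L ⟨vv, hvp⟩ hv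
    have hu' : uv = 0 ∨ uv = 1 ∨ uv = 2 ∨ uv = 3 := by omega
    rcases hu' with rfl | rfl | rfl | rfl
    · exact give1 a0v
    · by_cases hv4 : vv = 4
      · -- 1 - 2 - 3 - 0 - v
        exact give4 a12 a23 a03.symm a0v (by simp) (by simp)
          (by simp [Fin.ext_iff] <;> omega) (by simp)
          (by simp [Fin.ext_iff] <;> omega) (by simp [Fin.ext_iff] <;> omega)
          (by rw [cEg12 h7, cVg2 h7]; simp)
          (by rw [cEg12 h7, cEg23 h7]; simp)
          (by rw [cVg2 h7, cEg23 h7]; simp)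
          (by rw [cVg2 h7, cVg3 h7]; simp)
          (by rw [cEg23 h7, cVg3 h7]; simp)
          (by rw [cEg23 h7, swapE, cEg03 h7]; simp)
          (by rw [cVg3 h7, swapE, cEg03 h7]; simp)
          (by rw [cVg3 h7, cVg0 h7]; simp [Fin.ext_iff] <;> omega)
          (by rw [swapE, cEg03 h7, cVg0 h7]; simp [Fin.ext_iff] <;> omega)
          (by rw [swapE, cEg03 h7, cEg0L h7 (l := ⟨vv, hvp⟩) hv]; simp [Fin.ext_iff] <;> omega)
          (by rw [cVg0 h7, cEg0L h7 (l := ⟨vv, hvp⟩) hv]; simp [Fin.ext_iff] <;> omega)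
      · -- 1 - 0 - v
        exact give2 a01.symm a0v (by simp [Fin.ext_iff] <;> omega)
          (by rw [swapE, cEg01 h7, cVg0 h7]; simp [Fin.ext_iff] <;> omega)
          (by rw [swapE, cEg01 h7, cEg0L h7 (l := ⟨vv, hvp⟩) hv]; simp [Fin.ext_iff] <;> omega)
          (by rw [cVg0 h7, cEg0L h7 (l := ⟨vv, hvp⟩) hv]; simp [Fin.ext_iff] <;> omega)
    · by_cases hv4 : vv = 4
      · -- 2 - 3 - 0 - v
        exact give3 a23 a03.symm a0v (by simp [Fin.ext_iff] <;> omega)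
          (by simp [Fin.ext_iff] <;> omega) (by simp [Fin.ext_iff] <;> omega)
          (by rw [cEg23 h7, cVg3 h7]; simp)
          (by rw [cEg23 h7, swapE, cEg03 h7]; simp)
          (by rw [cVg3 h7, swapE, cEg03 h7]; simp)
          (by rw [cVg3 h7, cVg0 h7]; simp [Fin.ext_iff] <;> omega)
          (by rw [swapE, cEg03 h7, cVg0 h7]; simp [Fin.ext_iff] <;> omega)
          (by rw [swapE, cEg03 h7, cEg0L h7 (l := ⟨vv, hvp⟩) hv]; simp [Fin.ext_iff] <;> omega)
          (by rw [cVg0 h7, cEg0L h7 (l := ⟨vv, hvp⟩) hv]; simp [Fin.ext_iff] <;> omega)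
      · -- 2 - 1 - 0 - v
        exact give3 a12.symm a01.symm a0v (by simp [Fin.ext_iff] <;> omega)
          (by simp [Fin.ext_iff] <;> omega) (by simp [Fin.ext_iff] <;> omega)
          (by rw [swapE, cEg12 h7, cVg1 h7]; simp)
          (by rw [swapE, swapE ⟨1, by omega⟩ ⟨0, by omega⟩, cEg12 h7, cEg01 h7]; simp)
          (by rw [swapE ⟨1, by omega⟩ ⟨0, by omega⟩, cVg1 h7, cEg01 h7]; simp)
          (by rw [cVg1 h7, cVg0 h7]; simp [Fin.ext_iff] <;> omega)
          (by rw [swapE ⟨1, by omega⟩ ⟨0, by omega⟩, cEg01 h7, cVg0 h7];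
              simp [Fin.ext_iff] <;> omega)
          (by rw [swapE ⟨1, by omega⟩ ⟨0, by omega⟩, cEg01 h7, cEg0L h7 (l := ⟨vv, hvp⟩) hv];
              simp [Fin.ext_iff] <;> omega)
          (by rw [cVg0 h7, cEg0L h7 (l := ⟨vv, hvp⟩) hv]; simp [Fin.ext_iff] <;> omega)
    · by_cases hv5 : vv = 5
      · -- 3 - 2 - 1 - 0 - v
        exact give4 a23.symm a12.symm a01.symm a0v (by simp [Fin.ext_iff] <;> omega)
          (by simp [Fin.ext_iff] <;> omega) (by simp [Fin.ext_iff] <;> omega)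
          (by simp [Fin.ext_iff] <;> omega) (by simp [Fin.ext_iff] <;> omega)
          (by simp [Fin.ext_iff] <;> omega)
          (by rw [swapE, cEg23 h7, cVg2 h7]; simp)
          (by rw [swapE, swapE ⟨2, by omega⟩ ⟨1, by omega⟩, cEg23 h7, cEg12 h7]; simp)
          (by rw [swapE ⟨2, by omega⟩ ⟨1, by omega⟩, cVg2 h7, cEg12 h7]; simp)
          (by rw [cVg2 h7, cVg1 h7]; simp)
          (by rw [swapE ⟨2, by omega⟩ ⟨1, by omega⟩, cEg12 h7, cVg1 h7]; simp)
          (by rw [swapE ⟨2, by omega⟩ ⟨1, by omega⟩,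
                swapE ⟨1, by omega⟩ ⟨0, by omega⟩, cEg12 h7, cEg01 h7]; simp)
          (by rw [cVg1 h7, swapE ⟨1, by omega⟩ ⟨0, by omega⟩, cEg01 h7]; simp)
          (by rw [cVg1 h7, cVg0 h7]; simp [Fin.ext_iff] <;> omega)
          (by rw [swapE ⟨1, by omega⟩ ⟨0, by omega⟩, cEg01 h7, cVg0 h7];
              simp [Fin.ext_iff] <;> omega)
          (by rw [swapE ⟨1, by omega⟩ ⟨0, by omega⟩, cEg01 h7, cEg0L h7 (l := ⟨vv, hvp⟩) hv];
              simp [Fin.ext_iff] <;> omega)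
          (by rw [cVg0 h7, cEg0L h7 (l := ⟨vv, hvp⟩) hv]; simp [Fin.ext_iff] <;> omega)
      · -- 3 - 0 - v
        exact give2 a03.symm a0v (by simp [Fin.ext_iff] <;> omega)
          (by rw [swapE, cEg03 h7, cVg0 h7]; simp [Fin.ext_iff] <;> omega)
          (by rw [swapE, cEg03 h7, cEg0L h7 (l := ⟨vv, hvp⟩) hv]; simp [Fin.ext_iff] <;> omega)
          (by rw [cVg0 h7, cEg0L h7 (l := ⟨vv, hvp⟩) hv]; simp [Fin.ext_iff] <;> omega)
  · -- u leaf, v cycle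
    have a0u := a0L ⟨uv, hup⟩ hu
    have hv' : vv = 0 ∨ vv = 1 ∨ vv = 2 ∨ vv = 3 := by omega
    rcases hv' with rfl | rfl | rfl | rfl
    · exact give1 a0u.symm
    · by_cases hu4 : uv = 4
      · -- u - 0 - 3 - 2 - 1
        exact give4 a0u.symm a03 a23.symm a12.symm (by simp [Fin.ext_iff] <;> omega)
          (by simp [Fin.ext_iff] <;> omega) (by simp [Fin.ext_iff] <;> omega)
          (by simp [Fin.ext_iff] <;> omega) (by simp [Fin.ext_iff] <;> omega)
          (by simp [Fin.ext_iff] <;> omega)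
          (by rw [swapE, cEg0L h7 (l := ⟨uv, hup⟩) hu, cVg0 h7]; simp [Fin.ext_iff] <;> omega)
          (by rw [swapE, cEg0L h7 (l := ⟨uv, hup⟩) hu, cEg03 h7]; simp [Fin.ext_iff] <;> omega)
          (by rw [cVg0 h7, cEg03 h7]; simp [Fin.ext_iff] <;> omega)
          (by rw [cVg0 h7, cVg3 h7]; simp [Fin.ext_iff] <;> omega)
          (by rw [cEg03 h7, cVg3 h7]; simp)
          (by rw [cEg03 h7, swapE ⟨3, by omega⟩ ⟨2, by omega⟩, cEg23 h7]; simp)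
          (by rw [cVg3 h7, swapE ⟨3, by omega⟩ ⟨2, by omega⟩, cEg23 h7]; simp)
          (by rw [cVg3 h7, cVg2 h7]; simp)
          (by rw [swapE ⟨3, by omega⟩ ⟨2, by omega⟩, cEg23 h7, cVg2 h7]; simp)
          (by rw [swapE ⟨3, by omega⟩ ⟨2, by omega⟩,
                swapE ⟨2, by omega⟩ ⟨1, by omega⟩, cEg23 h7, cEg12 h7]; simp)
          (by rw [cVg2 h7, swapE ⟨2, by omega⟩ ⟨1, by omega⟩, cEg12 h7]; simp)
      · -- u - 0 - 1
        exact give2 a0u.symm a01 (by simp [Fin.ext_iff] <;> omega)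
          (by rw [swapE, cEg0L h7 (l := ⟨uv, hup⟩) hu, cVg0 h7]; simp [Fin.ext_iff] <;> omega)
          (by rw [swapE, cEg0L h7 (l := ⟨uv, hup⟩) hu, cEg01 h7]; simp [Fin.ext_iff] <;> omega)
          (by rw [cVg0 h7, cEg01 h7]; simp [Fin.ext_iff] <;> omega)
    · by_cases hu4 : uv = 4
      · -- u - 0 - 3 - 2
        exact give3 a0u.symm a03 a23.symm (by simp [Fin.ext_iff] <;> omega)
          (by simp [Fin.ext_iff] <;> omega) (by simp [Fin.ext_iff] <;> omega)
          (by rw [swapE, cEg0L h7 (l := ⟨uv, hup⟩) hu, cVg0 h7]; simp [Fin.ext_iff] <;> omega)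
          (by rw [swapE, cEg0L h7 (l := ⟨uv, hup⟩) hu, cEg03 h7]; simp [Fin.ext_iff] <;> omega)
          (by rw [cVg0 h7, cEg03 h7]; simp [Fin.ext_iff] <;> omega)
          (by rw [cVg0 h7, cVg3 h7]; simp [Fin.ext_iff] <;> omega)
          (by rw [cEg03 h7, cVg3 h7]; simp)
          (by rw [cEg03 h7, swapE ⟨3, by omega⟩ ⟨2, by omega⟩, cEg23 h7]; simp)
          (by rw [cVg3 h7, swapE ⟨3, by omega⟩ ⟨2, by omega⟩, cEg23 h7]; simp)
      · -- u - 0 - 1 - 2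
        exact give3 a0u.symm a01 a12 (by simp [Fin.ext_iff] <;> omega)
          (by simp [Fin.ext_iff] <;> omega) (by simp [Fin.ext_iff] <;> omega)
          (by rw [swapE, cEg0L h7 (l := ⟨uv, hup⟩) hu, cVg0 h7]; simp [Fin.ext_iff] <;> omega)
          (by rw [swapE, cEg0L h7 (l := ⟨uv, hup⟩) hu, cEg01 h7]; simp [Fin.ext_iff] <;> omega)
          (by rw [cVg0 h7, cEg01 h7]; simp [Fin.ext_iff] <;> omega)
          (by rw [cVg0 h7, cVg1 h7]; simp [Fin.ext_iff] <;> omega)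
          (by rw [cEg01 h7, cVg1 h7]; simp)
          (by rw [cEg01 h7, cEg12 h7]; simp)
          (by rw [cVg1 h7, cEg12 h7]; simp)
    · by_cases hu5 : uv = 5
      · -- u - 0 - 1 - 2 - 3
        exact give4 a0u.symm a01 a12 a23 (by simp [Fin.ext_iff] <;> omega)
          (by simp [Fin.ext_iff] <;> omega) (by simp [Fin.ext_iff] <;> omega)
          (by simp [Fin.ext_iff] <;> omega) (by simp [Fin.ext_iff] <;> omega)
          (by simp [Fin.ext_iff] <;> omega)
          (by rw [swapE, cEg0L h7 (l := ⟨uv, hup⟩) hu, cVg0 h7]; simp [Fin.ext_iff] <;> omega)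
          (by rw [swapE, cEg0L h7 (l := ⟨uv, hup⟩) hu, cEg01 h7]; simp [Fin.ext_iff] <;> omega)
          (by rw [cVg0 h7, cEg01 h7]; simp [Fin.ext_iff] <;> omega)
          (by rw [cVg0 h7, cVg1 h7]; simp [Fin.ext_iff] <;> omega)
          (by rw [cEg01 h7, cVg1 h7]; simp)
          (by rw [cEg01 h7, cEg12 h7]; simp)
          (by rw [cVg1 h7, cEg12 h7]; simp)
          (by rw [cVg1 h7, cVg2 h7]; simp)
          (by rw [cEg12 h7, cVg2 h7]; simp)
          (by rw [cEg12 h7, cEg23 h7]; simp)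
          (by rw [cVg2 h7, cEg23 h7]; simp)
      · -- u - 0 - 3
        exact give2 a0u.symm a03 (by simp [Fin.ext_iff] <;> omega)
          (by rw [swapE, cEg0L h7 (l := ⟨uv, hup⟩) hu, cVg0 h7]; simp [Fin.ext_iff] <;> omega)
          (by rw [swapE, cEg0L h7 (l := ⟨uv, hup⟩) hu, cEg03 h7]; simp [Fin.ext_iff] <;> omega)
          (by rw [cVg0 h7, cEg03 h7]; simp [Fin.ext_iff] <;> omega)
  · -- both leaves
    have a0u := a0L ⟨uv, hup⟩ hu
    have a0v := a0L ⟨vv, hvp⟩ hv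
    exact give2 a0u.symm a0v huv
      (by rw [swapE, cEg0L h7 (l := ⟨uv, hup⟩) hu, cVg0 h7]; simp [Fin.ext_iff] <;> omega)
      (by rw [swapE, cEg0L h7 (l := ⟨uv, hup⟩) hu, cEg0L h7 (l := ⟨vv, hvp⟩) hv]; simp [Fin.ext_iff] <;> omega)
      (by rw [cVg0 h7, cEg0L h7 (l := ⟨vv, hvp⟩) hv]; simp [Fin.ext_iff] <;> omega)

end TPCAux

namespace TPCAux
open SimpleGraph

def cV5 : Fin 5 → Fin 3 := ![1, 0, 2, 0, 0]
def cE5 : Sym2 (Fin 5) → Fin 3 := Sym2.lift ⟨fun a b =>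
  ![![0,2,0,2,0],![2,0,1,0,0],![0,1,0,0,0],![2,0,0,0,0],![0,0,0,0,0]] a b, by decide⟩

set_option maxHeartbeats 4000000 in
lemma up5 : (graphH4 5).IsTPCColoring cV5 cE5 := by decide

def cV6 : Fin 6 → Fin 4 := ![2, 1, 2, 0, 0, 0]
def cE6 : Sym2 (Fin 6) → Fin 4 := Sym2.lift ⟨fun a b =>
  ![![0,3,0,3,0,1],![3,0,0,0,0,0],![0,0,0,1,0,0],![3,0,1,0,0,0],![0,0,0,0,0,0],![1,0,0,0,0,0]] a b,
  by decide⟩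

set_option maxHeartbeats 16000000 in
lemma up6 : (graphH4 6).IsTPCColoring cV6 cE6 := by decide

end TPCAux

open SimpleGraph in
theorem tpc_H4 (n : ℕ) (h5 : 5 ≤ n) :
    ((n = 5 ∨ n = 6) → (graphH4 n).tpc = n - 2) ∧ (7 ≤ n → (graphH4 n).tpc = n - 3) := by
  constructor
  · rintro (rfl | rfl)
    · have mem : 3 ∈ {k | ∃ (cV : Fin 5 → Fin k) (cE : Sym2 (Fin 5) → Fin k),
          (graphH4 5).IsTPCColoring cV cE} := ⟨TPCAux.cV5, TPCAux.cE5, TPCAux.up5⟩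
      have : (graphH4 5).tpc = 3 := by
        rw [SimpleGraph.tpc]
        exact le_antisymm (Nat.sInf_le mem) (le_csInf ⟨3, mem⟩ fun k hk => TPCAux.lower5 hk)
      simpa using this
    · have mem : 4 ∈ {k | ∃ (cV : Fin 6 → Fin k) (cE : Sym2 (Fin 6) → Fin k),
          (graphH4 6).IsTPCColoring cV cE} := ⟨TPCAux.cV6, TPCAux.cE6, TPCAux.up6⟩
      have : (graphH4 6).tpc = 4 := by
        rw [SimpleGraph.tpc]
        exact le_antisymm (Nat.sInf_le mem) (le_csInf ⟨4, mem⟩ fun k hk => TPCAux.lower6 hk)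
      simpa using this
  · intro h7
    have mem : n - 3 ∈ {k | ∃ (cV : Fin n → Fin k) (cE : Sym2 (Fin n) → Fin k),
        (graphH4 n).IsTPCColoring cV cE} := ⟨TPCAux.cVg n h7, TPCAux.cEg n h7, TPCAux.upperTPC h7⟩
    rw [SimpleGraph.tpc]
    exact le_antisymm (Nat.sInf_le mem)
      (le_csInf ⟨n - 3, mem⟩ fun k hk => TPCAux.lower_ge (by omega) hk)
end

section
/- For n ≥ 4, if G and its complement are both connected graphs on n = 4 vertices, then tpc(G) + tpc(complement of G) = 6. -/
/-! ### Auxiliary list lemmas -/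

theorem List.interleaveTPC_length {α : Type*} : ∀ (xs ys : List α),
    (xs.interleaveTPC ys).length = xs.length + ys.length
  | [], ys => by simp [List.interleaveTPC]
  | x :: xs, ys => by
    rw [List.interleaveTPC, List.length_cons, List.interleaveTPC_length ys xs]
    simp; omega
termination_by xs ys => xs.length + ys.length

theorem List.interleaveTPC_map {α β : Type*} (f : α → β) : ∀ (xs ys : List α),
    (xs.map f).interleaveTPC (ys.map f) = (xs.interleaveTPC ys).map f
  | [], ys => by simp [List.interleaveTPC]
  | x :: xs, ys => by
    rw [List.map_cons, List.interleaveTPC, List.interleaveTPC, List.map_cons,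
      List.interleaveTPC_map f ys xs]
termination_by xs ys => xs.length + ys.length

/-- A structurally recursive version of `List.interleaveTPC` (which kernel-reduces). -/
def List.itl {α : Type*} : List α → List α → List α
  | [], ys => ys
  | x :: xs, [] => x :: xs
  | x :: xs, y :: ys => x :: y :: List.itl xs ys

theorem List.interleaveTPC_eq_itl {α : Type*} : ∀ (xs ys : List α),
    xs.interleaveTPC ys = xs.itl ys
  | [], ys => by rw [List.interleaveTPC, List.itl]
  | x :: xs, [] => by rw [List.interleaveTPC, List.interleaveTPC, List.itl]
  | x :: xs, y :: ys => by
    rw [List.interleaveTPC, List.interleaveTPC, List.itl, List.interleaveTPC_eq_itl xs ys]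
termination_by xs ys => xs.length + ys.length

/-! ### Decidability of total-proper notions -/

namespace SimpleGraph

variable {V : Type*} {W : Type*} {α β : Type*} {G : SimpleGraph V}

/-- The condition on a list saying that entries at distance 1 or 2 are distinct. -/
def seqOK (l : List α) : Prop :=
  ∀ i < l.length, l[i]? ≠ l[i+1]? ∧ l[i]? ≠ l[i+2]?

instance [DecidableEq α] (l : List α) : Decidable (seqOK l) :=
  decidable_of_iff (∀ i ∈ List.range l.length, l[i]? ≠ l[i+1]? ∧ l[i]? ≠ l[i+2]?)
    (by simp [seqOK])

theorem Walk.isTotalProper_iff_seqOK (cV : V → α) (cE : Sym2 V → α) {u v : V}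
    (p : G.Walk u v) : p.IsTotalProper cV cE ↔ seqOK (p.totalColorSeq cV cE) := by
  set l := p.totalColorSeq cV cE with hl
  constructor
  · intro h i hi
    obtain ⟨a, ha⟩ : ∃ a, l[i]? = some a := ⟨l[i], List.getElem?_eq_getElem hi⟩
    constructor
    · intro he
      exact h i a a ha (Or.inl (ha ▸ he.symm)) rfl
    · intro he
      exact h i a a ha (Or.inr (ha ▸ he.symm)) rfl
  · intro h i a b ha hb hab
    subst hab
    have hi : i < l.length := by
      rcases List.getElem?_eq_some_iff.mp ha with ⟨h', _⟩; exact h'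
    rcases hb with hb | hb
    · exact (h i hi).1 (by rw [ha, hb])
    · exact (h i hi).2 (by rw [ha, hb])

instance Walk.decidableIsTotalProper [DecidableEq α] (cV : V → α) (cE : Sym2 V → α)
    {u v : V} (p : G.Walk u v) : Decidable (p.IsTotalProper cV cE) :=
  decidable_of_iff (seqOK ((p.edges.map cE).itl (p.support.tail.dropLast.map cV)))
    (by rw [← List.interleaveTPC_eq_itl]
        exact (p.isTotalProper_iff_seqOK cV cE).symm)

instance (priority := 10000) decidableIsPath' [DecidableEq V] {u v : V} (p : G.Walk u v) :
    Decidable p.IsPath :=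
  decidable_of_iff _ p.isPath_def.symm

instance decidableIsTPCColoring [DecidableEq α] [DecidableEq V] [Fintype V]
    [DecidableRel G.Adj] (cV : V → α) (cE : Sym2 V → α) :
    Decidable (G.IsTPCColoring cV cE) :=
  decidable_of_iff (∀ u v : V, u ≠ v → ∃ q : {p : G.Walk u v // p.length < Fintype.card V},
      q.1.IsPath ∧ q.1.IsTotalProper cV cE)
    (by
      constructor
      · intro h u v huv
        obtain ⟨q, hq1, hq2⟩ := h u v huv
        exact ⟨q.1, hq1, hq2⟩
      · intro h u v huv
        obtain ⟨p, hp, hp2⟩ := h u v huv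
        exact ⟨⟨p, hp.length_lt⟩, hp, hp2⟩)

/-! ### Behaviour of `totalColorSeq` under maps and copies -/

theorem Walk.totalColorSeq_copy (cV : V → α) (cE : Sym2 V → α) {u v u' v' : V}
    (p : G.Walk u v) (hu : u = u') (hv : v = v') :
    (p.copy hu hv).totalColorSeq cV cE = p.totalColorSeq cV cE := by
  subst hu; subst hv; rfl

theorem Walk.totalColorSeq_map {G' : SimpleGraph W} (f : G →g G') (cV : W → α)
    (cE : Sym2 W → α) {u v : V} (p : G.Walk u v) :
    (p.map f).totalColorSeq cV cE
      = p.totalColorSeq (fun x => cV (f x)) (fun e => cE (e.map f)) := by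
  unfold Walk.totalColorSeq
  rw [Walk.edges_map, Walk.support_map, ← List.map_tail, ← List.map_dropLast,
    List.map_map, List.map_map]
  rfl

theorem Walk.totalColorSeq_comp (g : α → β) (cV : V → α) (cE : Sym2 V → α) {u v : V}
    (p : G.Walk u v) :
    p.totalColorSeq (fun x => g (cV x)) (fun e => g (cE e))
      = (p.totalColorSeq cV cE).map g := by
  unfold Walk.totalColorSeq
  rw [← List.interleaveTPC_map, List.map_map, List.map_map]
  rfl

theorem Walk.IsTotalProper.of_seq_eq {G' : SimpleGraph W} {cV : V → α} {cE : Sym2 V → α}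
    {cV' : W → α} {cE' : Sym2 W → α} {u v : V} {u' v' : W} {p : G.Walk u v}
    {q : G'.Walk u' v'}
    (hseq : q.totalColorSeq cV' cE' = p.totalColorSeq cV cE)
    (hp : p.IsTotalProper cV cE) : q.IsTotalProper cV' cE' := by
  unfold Walk.IsTotalProper
  rw [hseq]
  exact hp

theorem Walk.IsTotalProper.comp {cV : V → α} {cE : Sym2 V → α} {u v : V}
    {p : G.Walk u v} (hp : p.IsTotalProper cV cE) (g : α → β)
    (hg : Function.Injective g) :
    p.IsTotalProper (fun x => g (cV x)) (fun e => g (cE e)) := by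
  intro i a b ha hb hab
  rw [Walk.totalColorSeq_comp] at ha hb
  rw [List.getElem?_map] at ha
  obtain ⟨a', ha', rfl⟩ := Option.map_eq_some_iff.mp ha
  rcases hb with hb | hb <;> rw [List.getElem?_map] at hb <;>
    obtain ⟨b', hb', hgb⟩ := Option.map_eq_some_iff.mp hb
  · exact hp i a' b' ha' (Or.inl hb') (hg (hab.trans hgb.symm))
  · exact hp i a' b' ha' (Or.inr hb') (hg (hab.trans hgb.symm))

/-! ### The set of good numbers of colors -/

/-- The set of `k` for which there is a total-proper-connecting coloring with `k` colors. -/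
def TPCSet (G : SimpleGraph V) : Set ℕ :=
  {k | ∃ (cV : V → Fin k) (cE : Sym2 V → Fin k), G.IsTPCColoring cV cE}

theorem tpc_eq_sInf_TPCSet (G : SimpleGraph V) : G.tpc = sInf (TPCSet G) := rfl

theorem TPCSet.succ_mem {G : SimpleGraph V} {k : ℕ} (h : k ∈ TPCSet G) :
    k + 1 ∈ TPCSet G := by
  obtain ⟨cV, cE, h⟩ := h
  refine ⟨fun x => (cV x).castSucc, fun e => (cE e).castSucc, fun u v huv => ?_⟩
  obtain ⟨p, hp, hprop⟩ := h u v huv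
  exact ⟨p, hp, hprop.comp Fin.castSucc (Fin.castSucc_injective _)⟩

theorem TPCSet.mem_of_le {G : SimpleGraph V} {k m : ℕ} (hkm : k ≤ m)
    (h : k ∈ TPCSet G) : m ∈ TPCSet G := by
  induction hkm with
  | refl => exact h
  | step _ ih => exact TPCSet.succ_mem ih

theorem TPCSet.mem_of_iso {G : SimpleGraph V} {G' : SimpleGraph W} (e : G ≃g G')
    {k : ℕ} (h : k ∈ TPCSet G') : k ∈ TPCSet G := by
  obtain ⟨cV, cE, h⟩ := h
  refine ⟨fun x => cV (e x), fun s => cE (s.map e), fun u v huv => ?_⟩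
  have huv' : e u ≠ e v := fun hh => huv (e.toEquiv.injective hh)
  obtain ⟨p, hp, hprop⟩ := h (e u) (e v) huv'
  refine ⟨(p.map e.symm.toHom).copy (e.toEquiv.symm_apply_apply u)
    (e.toEquiv.symm_apply_apply v), ?_, ?_⟩
  · refine (Walk.isPath_copy _ _ _).mpr ?_
    exact p.map_isPath_of_injective e.symm.toEquiv.injective hp
  · refine Walk.IsTotalProper.of_seq_eq ?_ hprop
    refine (Walk.totalColorSeq_copy _ _ _ _ _).trans ?_
    rw [Walk.totalColorSeq_map]
    have hV : (fun x => cV (e (e.symm.toHom x))) = cV := by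
      funext x
      simp
    have hE : (fun s : Sym2 W => cE ((Sym2.map e.symm.toHom s).map e)) = cE := by
      funext s
      induction s using Sym2.ind with
      | _ x y => simp
    rw [hV, hE]

theorem tpc_eq_of_iso {G : SimpleGraph V} {G' : SimpleGraph W} (e : G ≃g G') :
    G.tpc = G'.tpc := by
  rw [tpc_eq_sInf_TPCSet, tpc_eq_sInf_TPCSet]
  congr 1
  ext k
  exact ⟨fun h => TPCSet.mem_of_iso e.symm h, fun h => TPCSet.mem_of_iso e h⟩

theorem tpc_eq_three {G : SimpleGraph V} (h3 : 3 ∈ TPCSet G) (h2 : 2 ∉ TPCSet G) :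
    G.tpc = 3 := by
  rw [tpc_eq_sInf_TPCSet]
  refine le_antisymm (Nat.sInf_le h3) ?_
  by_contra hlt
  push_neg at hlt
  have hmem : sInf (TPCSet G) ∈ TPCSet G := Nat.sInf_mem ⟨3, h3⟩
  exact h2 (TPCSet.mem_of_le (by omega) hmem)

/-- Complement isomorphism induced by an isomorphism. -/
def Iso.compl {G : SimpleGraph V} {G' : SimpleGraph W} (e : G ≃g G') : Gᶜ ≃g G'ᶜ where
  toEquiv := e.toEquiv
  map_rel_iff' := by
    intro a b
    show G'ᶜ.Adj (e a) (e b) ↔ Gᶜ.Adj a b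
    simp only [compl_adj, e.map_adj_iff, ne_eq]
    constructor
    · rintro ⟨h1, h2⟩
      exact ⟨fun hh => h1 (by rw [hh]), h2⟩
    · rintro ⟨h1, h2⟩
      exact ⟨fun hh => h1 (e.toEquiv.injective hh), h2⟩

theorem Connected.of_iso {G : SimpleGraph V} {G' : SimpleGraph W} (e : G ≃g G')
    (h : G.Connected) : G'.Connected :=
  h.map e.toHom fun w => ⟨e.symm w, e.apply_symm_apply w⟩

end SimpleGraph

/-! ### Small graphs on `Fin 4` encoded by `Fin 6 → Bool` -/

open SimpleGraph

def pada : Fin 6 → Fin 4 := ![0, 0, 0, 1, 1, 2]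
def padb : Fin 6 → Fin 4 := ![1, 2, 3, 2, 3, 3]

def gr (f : Fin 6 → Bool) : SimpleGraph (Fin 4) :=
  SimpleGraph.fromRel (fun a b => ∃ i, f i ∧ pada i = a ∧ padb i = b)

instance (f : Fin 6 → Bool) : DecidableRel (gr f).Adj := fun a b => by
  unfold gr; unfold SimpleGraph.fromRel; dsimp; infer_instance

/-- The booleans encoding the path `0 - 1 - 2 - 3`. -/
def p4b : Fin 6 → Bool := ![true, false, false, true, false, true]

set_option maxHeartbeats 4000000 in
set_option maxRecDepth 10000 in
theorem classify : ∀ f : Fin 6 → Bool, (gr f).Preconnected → (gr f)ᶜ.Preconnected →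
    ∃ σ : Equiv.Perm (Fin 4), ∀ x y, (gr f).Adj x y ↔ (gr p4b).Adj (σ x) (σ y) := by
  decide

def cV3 : Fin 4 → Fin 3 := ![0, 2, 0, 0]

def cE3 : Sym2 (Fin 4) → Fin 3 :=
  Sym2.lift ⟨fun a b => ![![0, 0, 0, 0], ![0, 0, 1, 0], ![0, 1, 0, 2], ![0, 0, 2, 0]] a b,
    by decide⟩

set_option maxHeartbeats 4000000 in
set_option maxRecDepth 10000 in
theorem p4_coloring : (gr p4b).IsTPCColoring cV3 cE3 := by decide

theorem p4_mem_three : 3 ∈ TPCSet (gr p4b) := ⟨cV3, cE3, p4_coloring⟩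

theorem p4_not_mem_two : 2 ∉ TPCSet (gr p4b) := by
  rintro ⟨cV, cE, h⟩
  obtain ⟨p, hp, hprop⟩ := h 0 2 (by decide)
  have hlen : 2 ≤ p.length := by
    cases p with
    | cons h' q =>
      cases q with
      | nil => exact absurd h' (by decide)
      | cons h'' q' => simp only [SimpleGraph.Walk.length_cons]; omega
  have hL : 3 ≤ (p.totalColorSeq cV cE).length := by
    unfold Walk.totalColorSeq
    rw [List.interleaveTPC_length, List.length_map, List.length_map, Walk.length_edges,
      List.length_dropLast, List.length_tail, Walk.length_support]
    omega
  set l := p.totalColorSeq cV cE with hl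
  have h0 : l[0]? = some (l[0]'(by omega)) := List.getElem?_eq_getElem (by omega)
  have h1 : l[1]? = some (l[1]'(by omega)) := List.getElem?_eq_getElem (by omega)
  have h2 : l[2]? = some (l[2]'(by omega)) := List.getElem?_eq_getElem (by omega)
  have d01 := hprop 0 _ _ h0 (Or.inl h1)
  have d02 := hprop 0 _ _ h0 (Or.inr h2)
  have d12 := hprop 1 _ _ h1 (Or.inl h2)
  exact (by decide : ∀ a b c : Fin 2, a ≠ b → a ≠ c → b ≠ c → False) _ _ _ d01 d02 d12

/-- `P4` is self-complementary. -/
theorem p4_compl_adj : ∀ a b : Fin 4,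
    (gr p4b).Adj ((![2, 0, 3, 1] : Fin 4 → Fin 4) a) ((![2, 0, 3, 1] : Fin 4 → Fin 4) b)
      ↔ (gr p4b)ᶜ.Adj a b := by decide

def p4SelfCompl : (gr p4b)ᶜ ≃g gr p4b where
  toEquiv := Equiv.mk (![2, 0, 3, 1] : Fin 4 → Fin 4) (![1, 3, 0, 2] : Fin 4 → Fin 4)
    (by decide) (by decide)
  map_rel_iff' := by intro a b; exact p4_compl_adj a b

open SimpleGraph in
theorem tpc_add_tpc_compl_four {V : Type*} [Fintype V]
    (h4 : Fintype.card V = 4) (G : SimpleGraph V) (hG : G.Connected)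
    (hGc : Gᶜ.Connected) : G.tpc + Gᶜ.tpc = 6 := by
  classical
  obtain ⟨e0⟩ : Nonempty (V ≃ Fin 4) := ⟨Fintype.equivFinOfCardEq h4⟩
  set G1 : SimpleGraph (Fin 4) := SimpleGraph.map e0.toEmbedding G with hG1def
  have eG : G ≃g G1 := SimpleGraph.Iso.map e0 G
  -- encode G1 as a `gr f`
  set f : Fin 6 → Bool := fun i => decide (G1.Adj (pada i) (padb i)) with hf
  have hgr : gr f = G1 := by
    ext a b
    rw [gr, SimpleGraph.fromRel_adj]
    constructor
    · rintro ⟨hne, ⟨i, hfi, rfl, rfl⟩ | ⟨i, hfi, rfl, rfl⟩⟩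
      · exact of_decide_eq_true hfi
      · exact (of_decide_eq_true hfi).symm
    · intro hAdj
      refine ⟨G1.ne_of_adj hAdj, ?_⟩
      have cover : ∀ a b : Fin 4, a ≠ b →
          ∃ i, (pada i = a ∧ padb i = b) ∨ (pada i = b ∧ padb i = a) := by decide
      obtain ⟨i, hi | hi⟩ := cover a b (G1.ne_of_adj hAdj)
      · exact Or.inl ⟨i, decide_eq_true (by rw [hi.1, hi.2]; exact hAdj), hi.1, hi.2⟩
      · exact Or.inr ⟨i, decide_eq_true (by rw [hi.1, hi.2]; exact hAdj.symm), hi.1, hi.2⟩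
  have hG1conn : G1.Connected := Connected.of_iso eG hG
  have hG1cconn : G1ᶜ.Connected := Connected.of_iso (Iso.compl eG) hGc
  obtain ⟨σ, hσ⟩ := classify f (by rw [hgr]; exact hG1conn.preconnected)
    (by rw [hgr]; exact hG1cconn.preconnected)
  have e1 : G1 ≃g gr p4b := by
    rw [← hgr]
    exact ⟨σ, fun {a b} => (hσ a b).symm⟩
  have eP : G ≃g gr p4b := eG.trans e1
  have h1 : G.tpc = 3 := by
    rw [tpc_eq_of_iso eP]
    exact tpc_eq_three p4_mem_three p4_not_mem_two
  have h2 : Gᶜ.tpc = 3 := by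
    rw [tpc_eq_of_iso ((Iso.compl eP).trans p4SelfCompl)]
    exact tpc_eq_three p4_mem_three p4_not_mem_two
  rw [h1, h2]
end
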